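/- arXiv:math/0410301 — 3 statements merged into one kernel-verified Lean document; each statement's English description precedes it below -/
import Mathlib

section
/- An oriented poset (P,O) arises from a labelling ω: P → [N] (with strict edges exactly those edges (s,t), s<t, having ω(s)>ω(t)) if and only if (P,O) has no cycles, where a cycle is a closed directed path in the Hasse diagram with strict edges oriented upwards and weak edges oriented downwards. -/
open scoped Classical
open Relation

noncomputable section

/-- Any transitive irreflexive relation on a finite type admits a strictly compatible
enumeration. -/
def auxPO {Q : Type} (r : Q → Q → Prop) (htrans : Transitive r)
    (hirr : ∀ a, ¬ r a a) : PartialOrder Q :=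
  { le := fun a b => r a b ∨ a = b
    le_refl := fun a => Or.inr rfl
    le_trans := by
      rintro a b c (hab | rfl) (hbc | rfl)
      · exact Or.inl (htrans hab hbc)
      · exact Or.inl hab
      · exact Or.inl hbc
      · exact Or.inr rfl
    le_antisymm := by
      rintro a b hab hba
      rcases hab with hab | rfl
      · rcases hba with hba | rfl
        · exact absurd (htrans hab hba) (hirr a)
        · rfl
      · rfl }

lemma aux_enum {Q : Type} [Fintype Q] (r : Q → Q → Prop) (htrans : Transitive r)
    (hirr : ∀ a, ¬ r a a) :
    ∃ ω : Q ≃ Fin (Fintype.card Q), ∀ a b, r a b → (ω a : ℕ) < (ω b : ℕ) := by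
  letI lo : LinearOrder Q := @instLinearOrderLinearExtensionOfPartialOrder Q (auxPO r htrans hirr)
  have hlt : ∀ a b : Q, r a b → lo.lt a b := by
    intro a b hab
    have h1 : (auxPO r htrans hirr).le a b := Or.inl hab
    have h2 : lo.le a b :=
      @OrderHom.monotone Q (LinearExtension Q) (auxPO r htrans hirr).toPreorder
        (@instLinearOrderLinearExtensionOfPartialOrder Q
          (auxPO r htrans hirr)).toPartialOrder.toPreorder
        (@toLinearExtension Q (auxPO r htrans hirr)) a b h1
    refine (lo.lt_iff_le_not_ge a b).mpr ⟨h2, fun h3 => ?_⟩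
    have hab' : a = b := lo.le_antisymm a b h2 h3
    subst hab'
    exact hirr a hab
  let e := monoEquivOfFin Q rfl
  refine ⟨e.symm.toEquiv, fun a b hab => ?_⟩
  exact e.symm.strictMono (hlt a b hab)

/-- An oriented poset (a finite poset with each covering edge designated strict or weak)
arises from a bijective labelling `ω : P → [N]` (strict edges being exactly the covers
`s ⋖ t` with `ω s > ω t`) if and only if it has no cycles: no nontrivial closed directed
path travelling up along strict edges and down along weak edges. -/
theorem stmt3 {P : Type} [Fintype P] [PartialOrder P] (strictE : P → P → Prop)
    (hE : ∀ s t, strictE s t → s ⋖ t) :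
    (∃ ω : P ≃ Fin (Fintype.card P),
        ∀ s t, s ⋖ t → (strictE s t ↔ (ω t : ℕ) < (ω s : ℕ))) ↔
      (∀ a : P, ¬ Relation.TransGen
        (fun a b => (a ⋖ b ∧ strictE a b) ∨ (b ⋖ a ∧ ¬ strictE b a)) a a) := by
  set R : P → P → Prop := fun a b => (a ⋖ b ∧ strictE a b) ∨ (b ⋖ a ∧ ¬ strictE b a) with hR
  constructor
  · rintro ⟨ω, hω⟩ a hcyc
    have step : ∀ x y : P, R x y → (ω y : ℕ) < (ω x : ℕ) := by
      rintro x y (⟨hcov, hs⟩ | ⟨hcov, hs⟩)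
      · exact (hω x y hcov).mp hs
      · have hnlt : ¬ (ω x : ℕ) < (ω y : ℕ) := fun h => hs ((hω y x hcov).mpr h)
        have hne : (ω y : ℕ) ≠ (ω x : ℕ) := by
          intro h
          exact hcov.ne (ω.injective (Fin.ext h))
        omega
    have key : ∀ b : P, Relation.TransGen R a b → (ω b : ℕ) < (ω a : ℕ) := by
      intro b h
      induction h with
      | single h => exact step _ _ h
      | tail _ h ih => exact lt_trans (step _ _ h) ih
    exact lt_irrefl _ (key a hcyc)
  · intro hnc
    have htrans : Transitive (fun a b : P => Relation.TransGen R b a) :=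
      fun _ _ _ h₁ h₂ => h₂.trans h₁
    obtain ⟨ω, hω⟩ := aux_enum (fun a b : P => Relation.TransGen R b a) htrans hnc
    refine ⟨ω, fun s t hcov => ?_⟩
    constructor
    · intro hs
      exact hω t s (Relation.TransGen.single (Or.inl ⟨hcov, hs⟩))
    · intro hlt
      by_contra hs
      have := hω s t (Relation.TransGen.single (Or.inr ⟨hcov, hs⟩))
      omega
end
end

section
/- For any cylindric skew shape C, the cylindric skew Schur function s_C(x) is a symmetric function. -/
open scoped Classical
open Relation

noncomputable section

/-- Formal power series in countably many variables `x_0, x_1, ...` over `ℚ`. -/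
abbrev FPS := MvPowerSeries ℕ ℚ

/-- A partition, encoded as a weakly decreasing, eventually-zero function giving part sizes. -/
def IsPtn (p : ℕ → ℕ) : Prop := Antitone p ∧ ∃ N, p N = 0

/-- The Young diagram (set of cells `(row, column)`, zero-indexed) of `p`. -/
def cells (p : ℕ → ℕ) : Set (ℕ × ℕ) := {c | c.2 < p c.1}

/-- The conjugate partition. -/
def conjPtn (p : ℕ → ℕ) : ℕ → ℕ := fun j => Nat.card {i : ℕ // j < p i}

/-- `p` fits in a `k × w` box: at most `k` parts, each of size at most `w`. -/
def FitsBox (p : ℕ → ℕ) (k w : ℕ) : Prop := p 0 ≤ w ∧ p k = 0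

/-- Generating function counting fillings `T` of a set `S` of boxes satisfying a predicate `Ok`,
weighted by content: the coefficient of `∏ x_v^{e v}` is the number of admissible fillings with
exactly `e v` boxes of `S` labelled `v`. -/
def tabSeries {X : Type} (S : Set X) (Ok : (X → ℕ) → Prop) : FPS :=
  fun e => (Nat.card {T : X → ℕ //
    Ok T ∧ (∀ x, x ∉ S → T x = 0) ∧ ∀ v, Nat.card {x : X // x ∈ S ∧ T x = v} = e v} : ℚ)

/-- Semistandardness for fillings of a set of cells in `ℕ × ℕ`:
weakly increasing along rows, strictly increasing down columns. -/
def RowColOk (S : Set (ℕ × ℕ)) (T : ℕ × ℕ → ℕ) : Prop :=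
  (∀ r c, (r, c) ∈ S → (r, c+1) ∈ S → T (r, c) ≤ T (r, c+1)) ∧
  (∀ r c, (r, c) ∈ S → (r+1, c) ∈ S → T (r, c) < T (r+1, c))

/-- The skew Schur function `s_{lam/mu}` as the generating function of semistandard skew tableaux. -/
def skewSchur (lam mu : ℕ → ℕ) : FPS :=
  tabSeries (cells lam \ cells mu) (RowColOk (cells lam \ cells mu))

/-- The Schur function `s_lam`. -/
def schur (lam : ℕ → ℕ) : FPS := skewSchur lam (fun _ => 0)

/-- A symmetric function is Schur-positive if it is a non-negative linear combination of
Schur functions. -/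
def IsSchurPos (f : FPS) : Prop :=
  ∃ (S : Finset (ℕ → ℕ)) (c : (ℕ → ℕ) → ℚ),
    (∀ p ∈ S, IsPtn p) ∧ (∀ p ∈ S, 0 ≤ c p) ∧ f = ∑ p ∈ S, c p • schur p

/-- The cylinder `C_{vu} = ℤ² / (-u,v)ℤ`. -/
abbrev Cyl (u v : ℕ) := (ℤ × ℤ) ⧸ AddSubgroup.zmultiples ((-(u : ℤ), (v : ℤ)) : ℤ × ℤ)

/-- The quotient map onto the cylinder. -/
def cmk (u v : ℕ) (a : ℤ × ℤ) : Cyl u v := QuotientAddGroup.mk a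

/-- `y` is the right neighbour of `x` in its row (a weak edge of the cylindric poset). -/
def rowAdj (u v : ℕ) (x y : Cyl u v) : Prop :=
  ∃ a : ℤ × ℤ, x = cmk u v a ∧ y = cmk u v (a.1 + 1, a.2)

/-- `y` is the next element above `x` in its column (a strict edge of the cylindric poset). -/
def colAdj (u v : ℕ) (x y : Cyl u v) : Prop :=
  ∃ a : ℤ × ℤ, x = cmk u v a ∧ y = cmk u v (a.1, a.2 + 1)

/-- The partial order on the cylinder generated by the row and column steps. -/
def cle (u v : ℕ) (x y : Cyl u v) : Prop :=
  ∃ a b : ℤ × ℤ, x = cmk u v a ∧ y = cmk u v b ∧ a.1 ≤ b.1 ∧ a.2 ≤ b.2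

/-- A cylindric skew shape: a finite convex subposet of the cylinder. -/
def IsCylShape (u v : ℕ) (C : Set (Cyl u v)) : Prop :=
  C.Finite ∧ ∀ x y z, cle u v x y → cle u v y z → x ∈ C → z ∈ C → y ∈ C

/-- Semistandardness for cylindric tableaux: weakly increasing along rows,
strictly increasing along columns. -/
def CylOk (u v : ℕ) (C : Set (Cyl u v)) (T : Cyl u v → ℕ) : Prop :=
  (∀ x y, x ∈ C → y ∈ C → rowAdj u v x y → T x ≤ T y) ∧
  (∀ x y, x ∈ C → y ∈ C → colAdj u v x y → T x < T y)

/-- The cylindric skew Schur function of a cylindric skew shape `C`. -/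
def cylSchur (u v : ℕ) (C : Set (Cyl u v)) : FPS := tabSeries C (CylOk u v C)


namespace BKproof


/-- rank of `k` in `S`: number of elements of `S` below `k`. -/
noncomputable def rkf (S : Set ℤ) (k : ℤ) : ℕ := (S ∩ Set.Iio k).ncard

lemma rkf_lt {S : Set ℤ} (hS : S.Finite) {k : ℤ} (hk : k ∈ S) : rkf S k < S.ncard := by
  apply Set.ncard_lt_ncard _ hS
  refine ⟨Set.inter_subset_left, fun hsub => ?_⟩
  exact absurd (hsub hk).2 (by simp)

lemma rkf_mono {S : Set ℤ} (hS : S.Finite) {k k' : ℤ} (hk : k ∈ S) (h : k < k') :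
    rkf S k < rkf S k' := by
  apply Set.ncard_lt_ncard _ (hS.inter_of_left _)
  refine ⟨Set.inter_subset_inter_right _ (fun a (ha : a < k) => lt_trans ha h), fun hsub => ?_⟩
  exact absurd (hsub ⟨hk, h⟩).2 (by simp)

lemma rkf_injOn {S : Set ℤ} (hS : S.Finite) {k k' : ℤ} (hk : k ∈ S) (hk' : k' ∈ S)
    (h : rkf S k = rkf S k') : k = k' := by
  rcases lt_trichotomy k k' with hlt | he | hlt
  · exact absurd h (Nat.ne_of_lt (rkf_mono hS hk hlt))
  · exact he
  · exact absurd h.symm (Nat.ne_of_lt (rkf_mono hS hk' hlt))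

lemma rkf_bij {S : Set ℤ} (hS : S.Finite) :
    Function.Bijective (fun x : S => (⟨rkf S x.1, rkf_lt hS x.2⟩ : Fin S.ncard)) := by
  have : Finite S := hS.to_subtype
  rw [Nat.bijective_iff_injective_and_card]
  constructor
  · intro x y hxy
    exact Subtype.ext (rkf_injOn hS x.2 y.2 (congrArg Fin.val hxy))
  · rw [Nat.card_coe_set_eq, Nat.card_eq_fintype_card, Fintype.card_fin]

lemma rkf_surj {S : Set ℤ} (hS : S.Finite) {n : ℕ} (hn : n < S.ncard) :
    ∃ k ∈ S, rkf S k = n := by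
  obtain ⟨⟨k, hk⟩, hfk⟩ := (rkf_bij hS).2 ⟨n, hn⟩
  exact ⟨k, hk, congrArg Fin.val hfk⟩

lemma rkf_count {S : Set ℤ} (hS : S.Finite) {b : ℕ} (hb : b ≤ S.ncard) :
    Nat.card {k : ℤ // k ∈ S ∧ rkf S k < b} = b := by
  have hbij : Function.Bijective
      (fun x : {k : ℤ // k ∈ S ∧ rkf S k < b} => (⟨rkf S x.1, x.2.2⟩ : Fin b)) := by
    constructor
    · intro x y hxy
      exact Subtype.ext (rkf_injOn hS x.2.1 y.2.1 (congrArg Fin.val hxy))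
    · intro ⟨n, hn⟩
      obtain ⟨k, hk, hrk⟩ := rkf_surj hS (lt_of_lt_of_le hn hb)
      exact ⟨⟨k, hk, by rw [hrk]; exact hn⟩, by simp [hrk]⟩
  rw [Nat.card_eq_of_bijective _ hbij, Nat.card_eq_fintype_card, Fintype.card_fin]

lemma rkf_split {S : Set ℤ} (hS : S.Finite) {A B : Set ℤ} (hU : S = A ∪ B)
    (hAB : ∀ a ∈ A, ∀ b ∈ B, a < b) {k : ℤ} (hk : k ∈ S) :
    k ∈ A ↔ rkf S k < A.ncard := by
  have hAS : A ⊆ S := hU ▸ Set.subset_union_left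
  constructor
  · intro hkA
    apply Set.ncard_lt_ncard _ (hS.subset hAS)
    refine ⟨fun j hj => ?_, fun hsub => absurd (hsub hkA).2 (by simp)⟩
    rcases (hU ▸ hj.1 : j ∈ A ∪ B) with h | h
    · exact h
    · exact absurd hj.2 (not_lt.2 (le_of_lt (hAB k hkA j h)))
  · intro hrk
    by_contra hkA
    have hkB : k ∈ B := (hU ▸ hk).resolve_left hkA
    have hsub : A ⊆ S ∩ Set.Iio k := fun a ha => ⟨hAS ha, hAB a ha k hkB⟩
    exact absurd hrk (not_lt.2 (Set.ncard_le_ncard hsub (hS.inter_of_left _)))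

lemma setOf_shift_eq (A : Set ℤ) (d : ℤ) : {j : ℤ | d + j ∈ A} = (fun a => a - d) '' A := by
  ext j
  constructor
  · intro hj; exact ⟨d + j, hj, by ring⟩
  · rintro ⟨a, ha, rfl⟩; simpa using ha

lemma ncard_shift (A : Set ℤ) (d : ℤ) : {j : ℤ | d + j ∈ A}.ncard = A.ncard := by
  rw [setOf_shift_eq, Set.ncard_image_of_injective _ (sub_left_injective)]

lemma finite_shift {A : Set ℤ} (hA : A.Finite) (d : ℤ) : {j : ℤ | d + j ∈ A}.Finite := by
  rw [setOf_shift_eq]; exact hA.image _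

lemma rkf_shift (A : Set ℤ) (d k : ℤ) : rkf {j : ℤ | d + j ∈ A} k = rkf A (d + k) := by
  unfold rkf
  have : {j : ℤ | d + j ∈ A} ∩ Set.Iio k = (fun a => a - d) '' (A ∩ Set.Iio (d + k)) := by
    ext j
    constructor
    · intro ⟨h1, h2⟩; exact ⟨d + j, ⟨h1, by simp at h2 ⊢; omega⟩, by ring⟩
    · rintro ⟨a, ⟨ha1, ha2⟩, rfl⟩
      simp at ha2 ⊢
      exact ⟨by simpa using ha1, by omega⟩
  rw [this, Set.ncard_image_of_injective _ (sub_left_injective)]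


section CylBasics
variable (u v : ℕ)

def rho : Cyl u v := cmk u v (1, 0)
def kap : Cyl u v := cmk u v (0, 1)

lemma cmk_add (a b : ℤ × ℤ) : cmk u v (a + b) = cmk u v a + cmk u v b := rfl

lemma cmk_surj (x : Cyl u v) : ∃ a, x = cmk u v a :=
  ⟨Quotient.out x, (Quotient.out_eq x).symm⟩

lemma cmk_zsmul (k : ℤ) (a : ℤ × ℤ) : k • cmk u v a = cmk u v (k • a) :=
  (map_zsmul (QuotientAddGroup.mk' (AddSubgroup.zmultiples ((-(u : ℤ), (v : ℤ)) : ℤ × ℤ))) k a).symm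

lemma rho_zsmul (k : ℤ) : k • rho u v = cmk u v (k, 0) := by
  rw [rho, cmk_zsmul]; congr 1; ext <;> simp

lemma cmk_eq_zero_iff (a : ℤ × ℤ) :
    cmk u v a = 0 ↔ ∃ t : ℤ, t • ((-(u : ℤ), (v : ℤ)) : ℤ × ℤ) = a := by
  rw [cmk, QuotientAddGroup.eq_zero_iff, AddSubgroup.mem_zmultiples_iff]

lemma rho_inj (hv : 0 < v) {k k' : ℤ} (h : k • rho u v = k' • rho u v) : k = k' := by
  have h0 : (k - k') • rho u v = 0 := by rw [sub_zsmul, h]; abel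
  rw [rho_zsmul, cmk_eq_zero_iff] at h0
  obtain ⟨t, ht⟩ := h0
  have h1 : t * v = 0 := congrArg Prod.snd ht
  have h2 : t * (-(u : ℤ)) = k - k' := congrArg Prod.fst ht
  have hv' : (v : ℤ) ≠ 0 := by exact_mod_cast hv.ne'
  have ht0 : t = 0 := by
    rcases mul_eq_zero.1 h1 with h | h
    · exact h
    · exact absurd h hv'
  rw [ht0, zero_mul] at h2
  omega

lemma add_rho_inj (hv : 0 < v) {x : Cyl u v} {k k' : ℤ}
    (h : x + k • rho u v = x + k' • rho u v) : k = k' :=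
  rho_inj u v hv (by exact add_left_cancel h)

lemma cle_shift (x : Cyl u v) (d : ℤ × ℤ) (h1 : 0 ≤ d.1) (h2 : 0 ≤ d.2) :
    cle u v x (x + cmk u v d) := by
  obtain ⟨a, rfl⟩ := cmk_surj u v x
  exact ⟨a, a + d, rfl, (cmk_add u v a d).symm ▸ rfl, by simpa using h1, by simpa using h2⟩

end CylBasics

section Convex
variable {u v : ℕ} {C : Set (Cyl u v)}

lemma conv_kap (hC : IsCylShape u v C) {x : Cyl u v} (hx : x ∈ C)
    (h : x + cmk u v (1, 1) ∈ C) : x + kap u v ∈ C := by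
  apply hC.2 x (x + kap u v) (x + cmk u v (1, 1)) (cle_shift u v x (0, 1) le_rfl zero_le_one)
    ?_ hx h
  have he : x + cmk u v (1, 1) = (x + kap u v) + cmk u v (1, 0) := by
    rw [kap, add_assoc, ← cmk_add]; norm_num
  rw [he]
  exact cle_shift u v _ (1, 0) zero_le_one le_rfl

lemma conv_rho (hC : IsCylShape u v C) {x : Cyl u v} (hx : x ∈ C)
    (h : x + cmk u v (1, 1) ∈ C) : x + rho u v ∈ C := by
  apply hC.2 x (x + rho u v) (x + cmk u v (1, 1)) (cle_shift u v x (1, 0) zero_le_one le_rfl)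
    ?_ hx h
  have he : x + cmk u v (1, 1) = (x + rho u v) + cmk u v (0, 1) := by
    rw [rho, add_assoc, ← cmk_add]; norm_num
  rw [he]
  exact cle_shift u v _ (0, 1) le_rfl zero_le_one

lemma conv_row (hC : IsCylShape u v C) {x : Cyl u v} (hx : x ∈ C) {k : ℤ}
    (hk : x + k • rho u v ∈ C) {j : ℤ} (h0 : 0 ≤ j) (hj : j ≤ k) : x + j • rho u v ∈ C := by
  apply hC.2 x (x + j • rho u v) (x + k • rho u v) ?_ ?_ hx hk
  · rw [rho_zsmul]; exact cle_shift u v x (j, 0) h0 le_rfl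
  · have he : x + k • rho u v = (x + j • rho u v) + cmk u v (k - j, 0) := by
      rw [rho_zsmul, rho_zsmul, add_assoc, ← cmk_add]
      norm_num
    rw [he]
    exact cle_shift u v _ (k - j, 0) (by omega) le_rfl

end Convex

section Adj
variable {u v : ℕ}

lemma rowAdj_iff {x y : Cyl u v} : rowAdj u v x y ↔ y = x + rho u v := by
  constructor
  · rintro ⟨a, rfl, rfl⟩
    rw [rho, ← cmk_add]
    congr 1
    ext <;> simp
  · rintro rfl
    obtain ⟨a, rfl⟩ := cmk_surj u v x
    refine ⟨a, rfl, ?_⟩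
    rw [rho, ← cmk_add]
    congr 1
    ext <;> simp

lemma colAdj_iff {x y : Cyl u v} : colAdj u v x y ↔ y = x + kap u v := by
  constructor
  · rintro ⟨a, rfl, rfl⟩
    rw [kap, ← cmk_add]
    congr 1
    ext <;> simp
  · rintro rfl
    obtain ⟨a, rfl⟩ := cmk_surj u v x
    refine ⟨a, rfl, ?_⟩
    rw [kap, ← cmk_add]
    congr 1
    ext <;> simp

variable {C : Set (Cyl u v)} {T : Cyl u v → ℕ}

lemma row_le (hT : CylOk u v C T) {x : Cyl u v} (hx : x ∈ C) (h : x + rho u v ∈ C) :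
    T x ≤ T (x + rho u v) :=
  hT.1 x _ hx h (rowAdj_iff.2 rfl)

lemma col_lt (hT : CylOk u v C T) {x : Cyl u v} (hx : x ∈ C) (h : x + kap u v ∈ C) :
    T x < T (x + kap u v) :=
  hT.2 x _ hx h (colAdj_iff.2 rfl)

lemma row_le_chain (hC : IsCylShape u v C) (hT : CylOk u v C T) {x : Cyl u v} (hx : x ∈ C)
    {k : ℤ} (h0 : 0 ≤ k) (hk : x + k • rho u v ∈ C) : T x ≤ T (x + k • rho u v) := by
  obtain ⟨n, rfl⟩ := Int.eq_ofNat_of_zero_le h0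
  clear h0
  induction n with
  | zero => simp
  | succ m ih =>
    have hm : x + (m : ℤ) • rho u v ∈ C :=
      conv_row hC hx hk (by positivity) (by exact_mod_cast Nat.le_succ m)
    have hstep : x + ((m : ℤ) + 1) • rho u v = (x + (m : ℤ) • rho u v) + rho u v := by
      rw [add_zsmul, one_zsmul, add_assoc]
    have h1 : T x ≤ T (x + (m : ℤ) • rho u v) := ih hm
    have h2 : T (x + (m : ℤ) • rho u v) ≤ T ((x + (m : ℤ) • rho u v) + rho u v) :=
      row_le hT hm (by rw [← hstep]; exact_mod_cast hk)
    calc T x ≤ _ := h1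
      _ ≤ _ := h2
      _ = T (x + ((m : ℤ) + 1) • rho u v) := by rw [hstep]
      _ = _ := by norm_num

end Adj

section BKdef
variable (u v : ℕ) (C : Set (Cyl u v)) (i : ℕ) (T : Cyl u v → ℕ)

/-- cell with value `i` whose upper neighbour is in `C` with value `i+1`. -/
def FixL (x : Cyl u v) : Prop :=
  x ∈ C ∧ T x = i ∧ x + kap u v ∈ C ∧ T (x + kap u v) = i + 1

/-- cell with value `i+1` whose lower neighbour is in `C` with value `i`. -/
def FixH (x : Cyl u v) : Prop :=
  x ∈ C ∧ T x = i + 1 ∧ x - kap u v ∈ C ∧ T (x - kap u v) = i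

/-- free cell: value `i` or `i+1`, not part of a vertical `(i, i+1)` pair. -/
def Fre (x : Cyl u v) : Prop :=
  x ∈ C ∧ (T x = i ∨ T x = i + 1) ∧ ¬ FixL u v C i T x ∧ ¬ FixH u v C i T x

def FSet (x : Cyl u v) : Set ℤ := {k : ℤ | Fre u v C i T (x + k • rho u v)}

def FLSet (x : Cyl u v) : Set ℤ :=
  {k : ℤ | k ∈ FSet u v C i T x ∧ T (x + k • rho u v) = i}

def FHSet (x : Cyl u v) : Set ℤ :=
  {k : ℤ | k ∈ FSet u v C i T x ∧ T (x + k • rho u v) = i + 1}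

def lcnt (x : Cyl u v) : ℕ := rkf (FSet u v C i T x) 0
def acnt (x : Cyl u v) : ℕ := (FLSet u v C i T x).ncard
def bcnt (x : Cyl u v) : ℕ := (FHSet u v C i T x).ncard

/-- The Bender–Knuth involution at `(i, i+1)`. -/
def BK (x : Cyl u v) : ℕ :=
  if Fre u v C i T x then
    (if lcnt u v C i T x < bcnt u v C i T x then i else i + 1)
  else T x

end BKdef

section BKlemmas
variable {u v : ℕ} {C : Set (Cyl u v)} {i : ℕ} {T : Cyl u v → ℕ}

lemma FixL_not_FixH {x : Cyl u v} (h : FixL u v C i T x) : ¬ FixH u v C i T x := by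
  intro h'
  have := h.2.1
  have := h'.2.1
  omega

lemma Fre_mem {x : Cyl u v} (h : Fre u v C i T x) : x ∈ C := h.1

lemma status_i {x : Cyl u v} (hx : x ∈ C) (hxi : T x = i) :
    FixL u v C i T x ∨ Fre u v C i T x := by
  by_cases h : x + kap u v ∈ C ∧ T (x + kap u v) = i + 1
  · exact Or.inl ⟨hx, hxi, h.1, h.2⟩
  · refine Or.inr ⟨hx, Or.inl hxi, fun hf => h ⟨hf.2.2.1, hf.2.2.2⟩, fun hf => ?_⟩
    have := hf.2.1
    omega

lemma status_i1 {x : Cyl u v} (hx : x ∈ C) (hxi : T x = i + 1) :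
    FixH u v C i T x ∨ Fre u v C i T x := by
  by_cases h : x - kap u v ∈ C ∧ T (x - kap u v) = i
  · exact Or.inl ⟨hx, hxi, h.1, h.2⟩
  · refine Or.inr ⟨hx, Or.inr hxi, fun hf => ?_, fun hf => h ⟨hf.2.2.1, hf.2.2.2⟩⟩
    have := hf.2.1
    omega

lemma FixL_not_Fre {x : Cyl u v} (h : FixL u v C i T x) : ¬ Fre u v C i T x :=
  fun hf => hf.2.2.1 h

lemma FixH_not_Fre {x : Cyl u v} (h : FixH u v C i T x) : ¬ Fre u v C i T x :=
  fun hf => hf.2.2.2 h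

lemma BK_not_free {x : Cyl u v} (h : ¬ Fre u v C i T x) : BK u v C i T x = T x := if_neg h

lemma BK_off {x : Cyl u v} (h : x ∉ C) : BK u v C i T x = T x :=
  BK_not_free (fun hf => h hf.1)

lemma BK_free_low {x : Cyl u v} (h : Fre u v C i T x)
    (hl : lcnt u v C i T x < bcnt u v C i T x) : BK u v C i T x = i := by
  rw [BK, if_pos h, if_pos hl]

lemma BK_free_high {x : Cyl u v} (h : Fre u v C i T x)
    (hl : ¬ lcnt u v C i T x < bcnt u v C i T x) : BK u v C i T x = i + 1 := by
  rw [BK, if_pos h, if_neg hl]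

lemma BK_free_mem {x : Cyl u v} (h : Fre u v C i T x) :
    BK u v C i T x = i ∨ BK u v C i T x = i + 1 := by
  by_cases hl : lcnt u v C i T x < bcnt u v C i T x
  · exact Or.inl (BK_free_low h hl)
  · exact Or.inr (BK_free_high h hl)

lemma BK_free_eq_i_iff {x : Cyl u v} (h : Fre u v C i T x) :
    BK u v C i T x = i ↔ lcnt u v C i T x < bcnt u v C i T x := by
  by_cases hl : lcnt u v C i T x < bcnt u v C i T x
  · simp [BK_free_low h hl, hl]
  · rw [BK_free_high h hl]
    omega

lemma zero_mem_FSet {x : Cyl u v} : (0 : ℤ) ∈ FSet u v C i T x ↔ Fre u v C i T x := by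
  rw [FSet, Set.mem_setOf_eq, zero_zsmul, add_zero]

lemma mem_FSet {x : Cyl u v} {k : ℤ} :
    k ∈ FSet u v C i T x ↔ Fre u v C i T (x + k • rho u v) := Iff.rfl

lemma shift_arg (x : Cyl u v) (d j : ℤ) :
    x + d • rho u v + j • rho u v = x + (d + j) • rho u v := by
  rw [add_assoc, ← add_zsmul]

lemma FSet_shift (x : Cyl u v) (d : ℤ) :
    FSet u v C i T (x + d • rho u v) = {j : ℤ | d + j ∈ FSet u v C i T x} := by
  ext j
  rw [mem_FSet, Set.mem_setOf_eq, mem_FSet, shift_arg]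

lemma FLSet_shift (x : Cyl u v) (d : ℤ) :
    FLSet u v C i T (x + d • rho u v) = {j : ℤ | d + j ∈ FLSet u v C i T x} := by
  ext j
  rw [FLSet, Set.mem_setOf_eq, Set.mem_setOf_eq, FSet_shift, Set.mem_setOf_eq, shift_arg]
  exact Iff.rfl

lemma FHSet_shift (x : Cyl u v) (d : ℤ) :
    FHSet u v C i T (x + d • rho u v) = {j : ℤ | d + j ∈ FHSet u v C i T x} := by
  ext j
  rw [FHSet, Set.mem_setOf_eq, Set.mem_setOf_eq, FSet_shift, Set.mem_setOf_eq, shift_arg]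
  exact Iff.rfl

lemma FSet_union (x : Cyl u v) :
    FSet u v C i T x = FLSet u v C i T x ∪ FHSet u v C i T x := by
  ext k
  constructor
  · intro hk
    rcases hk.2.1 with h | h
    · exact Or.inl ⟨hk, h⟩
    · exact Or.inr ⟨hk, h⟩
  · rintro (h | h) <;> exact h.1

lemma FSet_finite (hv : 0 < v) (hC : IsCylShape u v C) (x : Cyl u v) :
    (FSet u v C i T x).Finite := by
  have hsub : FSet u v C i T x ⊆ (fun k : ℤ => x + k • rho u v) ⁻¹' C :=
    fun k hk => Fre_mem hk
  apply Set.Finite.subset _ hsub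
  apply Set.Finite.preimage _ hC.1
  intro k _ k' _ h
  exact add_rho_inj u v hv h

lemma FLSet_finite (hv : 0 < v) (hC : IsCylShape u v C) (x : Cyl u v) :
    (FLSet u v C i T x).Finite :=
  (FSet_finite hv hC x).subset (fun k hk => hk.1)

lemma FHSet_finite (hv : 0 < v) (hC : IsCylShape u v C) (x : Cyl u v) :
    (FHSet u v C i T x).Finite :=
  (FSet_finite hv hC x).subset (fun k hk => hk.1)

lemma lcnt_shift (x : Cyl u v) (d : ℤ) :
    lcnt u v C i T (x + d • rho u v) = rkf (FSet u v C i T x) d := by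
  rw [lcnt, FSet_shift, rkf_shift, add_zero]

lemma bcnt_shift (x : Cyl u v) (d : ℤ) :
    bcnt u v C i T (x + d • rho u v) = bcnt u v C i T x := by
  rw [bcnt, FHSet_shift, ncard_shift, bcnt]

lemma acnt_shift (x : Cyl u v) (d : ℤ) :
    acnt u v C i T (x + d • rho u v) = acnt u v C i T x := by
  rw [acnt, FLSet_shift, ncard_shift, acnt]

lemma FL_FH_disjoint (x : Cyl u v) : Disjoint (FLSet u v C i T x) (FHSet u v C i T x) := by
  rw [Set.disjoint_left]
  intro k hk hk'
  have := hk.2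
  have := hk'.2
  omega

lemma ncard_FSet (hv : 0 < v) (hC : IsCylShape u v C) (x : Cyl u v) :
    (FSet u v C i T x).ncard = acnt u v C i T x + bcnt u v C i T x := by
  rw [FSet_union, Set.ncard_union_eq (FL_FH_disjoint x) (FLSet_finite hv hC x)
    (FHSet_finite hv hC x), acnt, bcnt]

lemma FL_lt_FH (hv : 0 < v) (hC : IsCylShape u v C) (hT : CylOk u v C T) (x : Cyl u v) :
    ∀ k ∈ FLSet u v C i T x, ∀ k' ∈ FHSet u v C i T x, k < k' := by
  intro k hk k' hk'
  by_contra hge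
  push_neg at hge
  have hne : k' ≠ k := by
    intro h
    rw [h] at hk'
    have := hk.2
    have := hk'.2
    omega
  have hlt : k' < k := lt_of_le_of_ne hge hne
  have hz : x + k' • rho u v ∈ C := Fre_mem hk'.1
  have hchain : T (x + k' • rho u v) ≤ T (x + k' • rho u v + (k - k') • rho u v) := by
    apply row_le_chain hC hT hz (by omega)
    rw [shift_arg]
    have : k' + (k - k') = k := by ring
    rw [this]
    exact Fre_mem hk.1
  rw [shift_arg] at hchain
  have : k' + (k - k') = k := by ring
  rw [this] at hchain
  have := hk.2
  have := hk'.2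
  omega

lemma mem_FL_iff (hv : 0 < v) (hC : IsCylShape u v C) (hT : CylOk u v C T) {x : Cyl u v}
    {k : ℤ} (hk : k ∈ FSet u v C i T x) :
    k ∈ FLSet u v C i T x ↔ rkf (FSet u v C i T x) k < acnt u v C i T x :=
  rkf_split (FSet_finite hv hC x) (FSet_union x) (FL_lt_FH hv hC hT x) hk

end BKlemmas

section BKpres
variable {u v : ℕ} {C : Set (Cyl u v)} {i : ℕ} {T : Cyl u v → ℕ}

lemma sub_add_kap (x : Cyl u v) : x - kap u v + kap u v = x := by abel
lemma add_sub_kap (x : Cyl u v) : x + kap u v - kap u v = x := by abel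

lemma Fre_BK (hT : CylOk u v C T) {x : Cyl u v} (h : Fre u v C i T x) :
    Fre u v C i (BK u v C i T) x := by
  refine ⟨h.1, BK_free_mem h, fun hf => ?_, fun hf => ?_⟩
  · -- FixL for BK: T' x = i, x + κ ∈ C, T' (x+κ) = i + 1
    obtain ⟨-, hxv, hupC, hupv⟩ := hf
    have hcl : T x < T (x + kap u v) := col_lt hT h.1 hupC
    have hxi : T x = i ∨ T x = i + 1 := h.2.1
    by_cases hfu : Fre u v C i T (x + kap u v)
    · have hup2 : T (x + kap u v) = i ∨ T (x + kap u v) = i + 1 := hfu.2.1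
      have h1 : T x = i := by omega
      have h2 : T (x + kap u v) = i + 1 := by omega
      exact h.2.2.1 ⟨h.1, h1, hupC, h2⟩
    · rw [BK_not_free hfu] at hupv
      have h1 : T x = i := by omega
      exact h.2.2.1 ⟨h.1, h1, hupC, hupv⟩
  · -- FixH for BK
    obtain ⟨-, hxv, hdnC, hdnv⟩ := hf
    have hcl : T (x - kap u v) < T x := by
      have := col_lt hT hdnC (by rw [sub_add_kap]; exact h.1)
      rwa [sub_add_kap] at this
    have hxi : T x = i ∨ T x = i + 1 := h.2.1
    by_cases hfd : Fre u v C i T (x - kap u v)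
    · have hdn2 : T (x - kap u v) = i ∨ T (x - kap u v) = i + 1 := hfd.2.1
      have h1 : T x = i + 1 := by omega
      have h2 : T (x - kap u v) = i := by omega
      exact h.2.2.2 ⟨h.1, h1, hdnC, h2⟩
    · rw [BK_not_free hfd] at hdnv
      have h1 : T x = i + 1 := by omega
      exact h.2.2.2 ⟨h.1, h1, hdnC, hdnv⟩

lemma FixL_BK {x : Cyl u v} (h : FixL u v C i T x) :
    FixL u v C i (BK u v C i T) x := by
  obtain ⟨hx, hxv, hupC, hupv⟩ := h
  have hup : FixH u v C i T (x + kap u v) := by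
    refine ⟨hupC, hupv, ?_, ?_⟩ <;> rw [add_sub_kap] <;> assumption
  rw [FixL, BK_not_free (FixL_not_Fre ⟨hx, hxv, hupC, hupv⟩),
    BK_not_free (FixH_not_Fre hup)]
  exact ⟨hx, hxv, hupC, hupv⟩

lemma FixH_BK {x : Cyl u v} (h : FixH u v C i T x) :
    FixH u v C i (BK u v C i T) x := by
  obtain ⟨hx, hxv, hdnC, hdnv⟩ := h
  have hdn : FixL u v C i T (x - kap u v) := by
    refine ⟨hdnC, hdnv, ?_, ?_⟩ <;> rw [sub_add_kap] <;> assumption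
  rw [FixH, BK_not_free (FixH_not_Fre ⟨hx, hxv, hdnC, hdnv⟩),
    BK_not_free (FixL_not_Fre hdn)]
  exact ⟨hx, hxv, hdnC, hdnv⟩

lemma Fre_BK_iff (hT : CylOk u v C T) {x : Cyl u v} :
    Fre u v C i (BK u v C i T) x ↔ Fre u v C i T x := by
  constructor
  · intro h'
    by_contra h
    have hbk : BK u v C i T x = T x := BK_not_free h
    rcases h'.2.1 with hv1 | hv1
    · rw [hbk] at hv1
      rcases status_i h'.1 hv1 with hs | hs
      · exact h'.2.2.1 (FixL_BK hs)
      · exact h hs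
    · rw [hbk] at hv1
      rcases status_i1 h'.1 hv1 with hs | hs
      · exact h'.2.2.2 (FixH_BK hs)
      · exact h hs
  · exact Fre_BK hT

lemma FixL_BK_iff (hT : CylOk u v C T) {x : Cyl u v} :
    FixL u v C i (BK u v C i T) x ↔ FixL u v C i T x := by
  constructor
  · intro h'
    by_cases hf : Fre u v C i T x
    · exact absurd h' ((Fre_BK hT hf).2.2.1)
    · have hbk : BK u v C i T x = T x := BK_not_free hf
      have hxv : T x = i := by rw [← hbk]; exact h'.2.1
      rcases status_i h'.1 hxv with hs | hs
      · exact hs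
      · exact absurd hs hf
  · exact FixL_BK

lemma FixH_BK_iff (hT : CylOk u v C T) {x : Cyl u v} :
    FixH u v C i (BK u v C i T) x ↔ FixH u v C i T x := by
  constructor
  · intro h'
    by_cases hf : Fre u v C i T x
    · exact absurd h' ((Fre_BK hT hf).2.2.2)
    · have hbk : BK u v C i T x = T x := BK_not_free hf
      have hxv : T x = i + 1 := by rw [← hbk]; exact h'.2.1
      rcases status_i1 h'.1 hxv with hs | hs
      · exact hs
      · exact absurd hs hf
  · exact FixH_BK

lemma FSet_BK (hT : CylOk u v C T) (x : Cyl u v) :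
    FSet u v C i (BK u v C i T) x = FSet u v C i T x := by
  ext k
  exact Fre_BK_iff hT

lemma lcnt_BK (hT : CylOk u v C T) (x : Cyl u v) :
    lcnt u v C i (BK u v C i T) x = lcnt u v C i T x := by
  rw [lcnt, FSet_BK hT, lcnt]

lemma BK_col (hT : CylOk u v C T) {x : Cyl u v} (hx : x ∈ C) (hup : x + kap u v ∈ C) :
    BK u v C i T x < BK u v C i T (x + kap u v) := by
  have hcl : T x < T (x + kap u v) := col_lt hT hx hup
  by_cases h1 : Fre u v C i T x <;> by_cases h2 : Fre u v C i T (x + kap u v)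
  · exfalso
    have hv1 := h1.2.1
    have hv2 := h2.2.1
    have hx1 : T x = i := by omega
    have hx2 : T (x + kap u v) = i + 1 := by omega
    exact h1.2.2.1 ⟨hx, hx1, hup, hx2⟩
  · rw [BK_not_free h2]
    have hv1 := h1.2.1
    have hne : T (x + kap u v) ≠ i + 1 := by
      intro hup1
      have hx1 : T x = i := by omega
      exact h1.2.2.1 ⟨hx, hx1, hup, hup1⟩
    rcases BK_free_mem h1 with hb | hb <;> omega
  · rw [BK_not_free h1]
    have hv2 := h2.2.1
    have hne : T x ≠ i := by
      intro hx1
      have hup1 : T (x + kap u v) = i + 1 := by omega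
      refine h2.2.2.2 ⟨hup, hup1, ?_, ?_⟩ <;> rw [add_sub_kap] <;> assumption
    rcases BK_free_mem h2 with hb | hb <;> omega
  · rw [BK_not_free h1, BK_not_free h2]; exact hcl

lemma rho_add_kap (x : Cyl u v) : x + cmk u v (1, 1) = x + rho u v + kap u v := by
  rw [add_assoc, rho, kap, ← cmk_add]
  norm_num

lemma BK_row (hv' : 0 < v) (hC : IsCylShape u v C) (hT : CylOk u v C T) {x : Cyl u v}
    (hx : x ∈ C) (hr : x + rho u v ∈ C) :
    BK u v C i T x ≤ BK u v C i T (x + rho u v) := by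
  have hrl : T x ≤ T (x + rho u v) := row_le hT hx hr
  have hone : x + rho u v = x + (1 : ℤ) • rho u v := by rw [one_zsmul]
  by_cases h1 : Fre u v C i T x <;> by_cases h2 : Fre u v C i T (x + rho u v)
  · by_cases hl : lcnt u v C i T x < bcnt u v C i T x
    · rw [BK_free_low h1 hl]
      rcases BK_free_mem h2 with hb | hb <;> omega
    · rw [BK_free_high h1 hl]
      have hbnd : ¬ lcnt u v C i T (x + rho u v) < bcnt u v C i T (x + rho u v) := by
        rw [hone, lcnt_shift, bcnt_shift]
        have h0m : (0 : ℤ) ∈ FSet u v C i T x := zero_mem_FSet.2 h1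
        have : rkf (FSet u v C i T x) 0 < rkf (FSet u v C i T x) 1 :=
          rkf_mono (FSet_finite hv' hC x) h0m zero_lt_one
        simp only [lcnt] at hl this
        omega
      rw [BK_free_high h2 hbnd]
  · rw [BK_not_free h2]
    have hv1 := h1.2.1
    rcases BK_free_mem h1 with hb | hb
    · omega
    · rw [hb]
      have hne : T (x + rho u v) ≠ i := by
        intro hrv
        have hx1 : T x = i := by omega
        rcases status_i hr hrv with hs | hs
        · -- FixL at x + rho: derive FixL at x, contradiction
          obtain ⟨-, -, hupC, hupv⟩ := hs
          have h11 : x + cmk u v (1, 1) ∈ C := by rw [rho_add_kap]; exact hupC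
          have hk1 : x + kap u v ∈ C := conv_kap hC hx h11
          have hcl : T x < T (x + kap u v) := col_lt hT hx hk1
          have hrow : T (x + kap u v) ≤ T (x + kap u v + rho u v) := by
            apply row_le hT hk1
            have : x + kap u v + rho u v = x + rho u v + kap u v := by abel
            rw [this]; exact hupC
          have heq : x + kap u v + rho u v = x + rho u v + kap u v := by abel
          rw [heq] at hrow
          have : T (x + kap u v) = i + 1 := by omega
          exact h1.2.2.1 ⟨hx, hx1, hk1, this⟩
        · exact h2 hs
      omega
  · rw [BK_not_free h1]
    have hv2 := h2.2.1
    rcases BK_free_mem h2 with hb | hb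
    · rw [hb]
      by_contra hgt
      push_neg at hgt
      have hx1 : T x = i + 1 := by omega
      have hr1 : T (x + rho u v) = i + 1 := by omega
      rcases status_i1 hx hx1 with hs | hs
      · obtain ⟨-, -, hdnC, hdnv⟩ := hs
        have h11 : (x - kap u v) + cmk u v (1, 1) ∈ C := by
          have : (x - kap u v) + cmk u v (1, 1) = x + rho u v := by
            rw [rho_add_kap]; abel
          rw [this]; exact hr
        have hwr : (x - kap u v) + rho u v ∈ C := conv_rho hC hdnC h11
        have hrow : T (x - kap u v) ≤ T ((x - kap u v) + rho u v) := row_le hT hdnC hwr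
        have hcol : T ((x - kap u v) + rho u v) < T ((x - kap u v) + rho u v + kap u v) := by
          apply col_lt hT hwr
          have : (x - kap u v) + rho u v + kap u v = x + rho u v := by abel
          rw [this]; exact hr
        have heq2 : (x - kap u v) + rho u v + kap u v = x + rho u v := by abel
        rw [heq2] at hcol
        have hval : T ((x - kap u v) + rho u v) = i := by omega
        refine h2.2.2.2 ⟨hr, hr1, ?_, ?_⟩
        · have : x + rho u v - kap u v = (x - kap u v) + rho u v := by abel
          rw [this]; exact hwr
        · have : x + rho u v - kap u v = (x - kap u v) + rho u v := by abel
          rw [this]; exact hval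
      · exact h1 hs
    · omega
  · rw [BK_not_free h1, BK_not_free h2]; exact hrl

lemma CylOk_BK (hv' : 0 < v) (hC : IsCylShape u v C) (hT : CylOk u v C T) :
    CylOk u v C (BK u v C i T) := by
  constructor
  · intro x y hx hy hadj
    rw [rowAdj_iff] at hadj
    subst hadj
    exact BK_row hv' hC hT hx hy
  · intro x y hx hy hadj
    rw [colAdj_iff] at hadj
    subst hadj
    exact BK_col hT hx hy

end BKpres

section BKinvol
variable {u v : ℕ} {C : Set (Cyl u v)} {i : ℕ} {T : Cyl u v → ℕ}

lemma ncard_setOf_rkf_lt {S : Set ℤ} (hS : S.Finite) {b : ℕ} (hb : b ≤ S.ncard) :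
    {k : ℤ | k ∈ S ∧ rkf S k < b}.ncard = b := by
  rw [← Nat.card_coe_set_eq]
  exact rkf_count hS hb

lemma ncard_setOf_rkf_ge {S : Set ℤ} (hS : S.Finite) {b : ℕ} (hb : b ≤ S.ncard) :
    {k : ℤ | k ∈ S ∧ ¬ rkf S k < b}.ncard = S.ncard - b := by
  have hsplit : S = {k : ℤ | k ∈ S ∧ rkf S k < b} ∪ {k : ℤ | k ∈ S ∧ ¬ rkf S k < b} := by
    ext k
    by_cases h : rkf S k < b <;> simp [h] <;> omega
  have hdis : Disjoint {k : ℤ | k ∈ S ∧ rkf S k < b} {k : ℤ | k ∈ S ∧ ¬ rkf S k < b} := by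
    rw [Set.disjoint_left]
    rintro k ⟨-, h1⟩ ⟨-, h2⟩
    exact h2 h1
  have h1 : S.ncard = {k : ℤ | k ∈ S ∧ rkf S k < b}.ncard
      + {k : ℤ | k ∈ S ∧ ¬ rkf S k < b}.ncard := by
    conv_lhs => rw [hsplit]
    exact Set.ncard_union_eq hdis (hS.subset (fun k hk => hk.1)) (hS.subset (fun k hk => hk.1))
  rw [ncard_setOf_rkf_lt hS hb] at h1
  omega

lemma FHSet_BK (hv' : 0 < v) (hC : IsCylShape u v C) (hT : CylOk u v C T) (x : Cyl u v) :
    FHSet u v C i (BK u v C i T) x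
      = {k : ℤ | k ∈ FSet u v C i T x ∧ ¬ rkf (FSet u v C i T x) k < bcnt u v C i T x} := by
  ext k
  constructor
  · rintro ⟨hk, hval⟩
    rw [FSet_BK hT] at hk
    refine ⟨hk, fun hlt => ?_⟩
    have : BK u v C i T (x + k • rho u v) = i := by
      apply BK_free_low hk
      rw [lcnt_shift, bcnt_shift]
      exact hlt
    omega
  · rintro ⟨hk, hge⟩
    refine ⟨by rw [FSet_BK hT]; exact hk, ?_⟩
    apply BK_free_high hk
    rw [lcnt_shift, bcnt_shift]
    exact hge

lemma bcnt_le (hv' : 0 < v) (hC : IsCylShape u v C) (x : Cyl u v) :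
    bcnt u v C i T x ≤ (FSet u v C i T x).ncard := by
  rw [ncard_FSet hv' hC]
  omega

lemma bcnt_BK (hv' : 0 < v) (hC : IsCylShape u v C) (hT : CylOk u v C T) (x : Cyl u v) :
    bcnt u v C i (BK u v C i T) x = acnt u v C i T x := by
  rw [bcnt, FHSet_BK hv' hC hT,
    ncard_setOf_rkf_ge (FSet_finite hv' hC x) (bcnt_le hv' hC x), ncard_FSet hv' hC]
  omega

lemma zero_mem_FLSet {x : Cyl u v} (h : Fre u v C i T x) :
    (0 : ℤ) ∈ FLSet u v C i T x ↔ T x = i := by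
  rw [FLSet, Set.mem_setOf_eq, zero_zsmul, add_zero, zero_mem_FSet]
  tauto

lemma BK_invol (hv' : 0 < v) (hC : IsCylShape u v C) (hT : CylOk u v C T) (x : Cyl u v) :
    BK u v C i (BK u v C i T) x = T x := by
  by_cases hf : Fre u v C i T x
  · have hf' : Fre u v C i (BK u v C i T) x := Fre_BK hT hf
    have h0 : (0 : ℤ) ∈ FSet u v C i T x := zero_mem_FSet.2 hf
    have hiff : T x = i ↔ lcnt u v C i T x < acnt u v C i T x := by
      rw [← zero_mem_FLSet hf, mem_FL_iff hv' hC hT h0, lcnt]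
    rcases hf.2.1 with hval | hval
    · rw [hval]
      apply BK_free_low hf'
      rw [lcnt_BK hT, bcnt_BK hv' hC hT]
      exact hiff.1 hval
    · rw [hval]
      apply BK_free_high hf'
      rw [lcnt_BK hT, bcnt_BK hv' hC hT]
      intro hlt
      have := hiff.2 hlt
      omega
  · have hf' : ¬ Fre u v C i (BK u v C i T) x := fun h => hf ((Fre_BK_iff hT).1 h)
    rw [BK_not_free hf', BK_not_free hf]

end BKinvol

section BKcount
variable {u v : ℕ} {C : Set (Cyl u v)} {i : ℕ} {T : Cyl u v → ℕ}

lemma ncard_FixL_eq_FixH :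
    {x : Cyl u v | FixL u v C i T x}.ncard = {x : Cyl u v | FixH u v C i T x}.ncard := by
  have himg : (fun x : Cyl u v => x + kap u v) '' {x | FixL u v C i T x}
      = {x | FixH u v C i T x} := by
    ext z
    constructor
    · rintro ⟨x, ⟨hx, hxv, hupC, hupv⟩, rfl⟩
      refine ⟨hupC, hupv, ?_, ?_⟩ <;> rw [add_sub_kap] <;> assumption
    · rintro ⟨hz, hzv, hdnC, hdnv⟩
      exact ⟨z - kap u v, ⟨hdnC, hdnv, by rw [sub_add_kap]; exact hz,
        by rw [sub_add_kap]; exact hzv⟩, sub_add_kap z⟩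
  rw [← himg, Set.ncard_image_of_injective _ (add_left_injective _)]

lemma lcnt_eq_rkf_zero (x : Cyl u v) : lcnt u v C i T x = rkf (FSet u v C i T x) 0 := rfl

lemma zero_mem_FHSet {x : Cyl u v} (h : Fre u v C i T x) (hval : T x = i + 1) :
    (0 : ℤ) ∈ FHSet u v C i T x := by
  rw [FHSet, Set.mem_setOf_eq, zero_zsmul, add_zero]
  exact ⟨zero_mem_FSet.2 h, hval⟩

lemma card_newlow_eq_freeHigh (hv' : 0 < v) (hC : IsCylShape u v C) (hT : CylOk u v C T) :
    Nat.card {x : Cyl u v // Fre u v C i T x ∧ lcnt u v C i T x < bcnt u v C i T x}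
      = Nat.card {x : Cyl u v // Fre u v C i T x ∧ T x = i + 1} := by
  have hex : ∀ x : {x : Cyl u v // Fre u v C i T x ∧ lcnt u v C i T x < bcnt u v C i T x},
      ∃ k, k ∈ FHSet u v C i T x.1 ∧ rkf (FHSet u v C i T x.1) k = lcnt u v C i T x.1 := by
    intro x
    obtain ⟨k, hk1, hk2⟩ := rkf_surj (FHSet_finite hv' hC x.1) x.2.2
    exact ⟨k, hk1, hk2⟩
  choose kf hk1 hk2 using hex
  refine Nat.card_eq_of_bijective (fun x => ⟨x.1 + kf x • rho u v, (hk1 x).1, (hk1 x).2⟩)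
    ⟨?_, ?_⟩
  · -- injective
    intro x y hxy
    have hval : (x : Cyl u v) + kf x • rho u v = (y : Cyl u v) + kf y • rho u v :=
      congrArg Subtype.val hxy
    have hyx : (y : Cyl u v) = (x : Cyl u v) + (kf x - kf y) • rho u v := by
      apply add_right_cancel (b := kf y • rho u v)
      rw [← hval, sub_zsmul]
      abel
    have hFH : FHSet u v C i T y.1 = {j : ℤ | (kf x - kf y) + j ∈ FHSet u v C i T x.1} := by
      rw [hyx]; exact FHSet_shift _ _
    have hrk : rkf (FHSet u v C i T y.1) (kf y) = rkf (FHSet u v C i T x.1) (kf x) := by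
      rw [hFH, rkf_shift]
      congr 1
      ring
    have hl : lcnt u v C i T y.1 = rkf (FSet u v C i T x.1) (kf x - kf y) := by
      rw [hyx, lcnt_shift]
    have h1 : rkf (FSet u v C i T x.1) (kf x - kf y) = rkf (FSet u v C i T x.1) 0 := by
      rw [← hl, ← lcnt_eq_rkf_zero, ← hk2 x, ← hk2 y, hrk]
    have hd : kf x - kf y ∈ FSet u v C i T x.1 := by
      rw [mem_FSet, ← hyx]
      exact y.2.1
    have h0 : (0 : ℤ) ∈ FSet u v C i T x.1 := zero_mem_FSet.2 x.2.1
    have hdz : kf x - kf y = 0 := rkf_injOn (FSet_finite hv' hC x.1) hd h0 h1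
    apply Subtype.ext
    rw [hyx, hdz, zero_zsmul, add_zero]
  · -- surjective
    intro y
    set n := rkf (FHSet u v C i T y.1) 0 with hn
    have h0FH : (0 : ℤ) ∈ FHSet u v C i T y.1 := zero_mem_FHSet y.2.1 y.2.2
    have hnb : n < bcnt u v C i T y.1 := rkf_lt (FHSet_finite hv' hC y.1) h0FH
    have hnm : n < (FSet u v C i T y.1).ncard := by
      have := bcnt_le (hv' := hv') (hC := hC) (x := y.1) (T := T) (i := i)
      omega
    obtain ⟨k2, hk2S, hk2r⟩ := rkf_surj (FSet_finite hv' hC y.1) hnm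
    have hxFre : Fre u v C i T (y.1 + k2 • rho u v) := hk2S
    have hxl : lcnt u v C i T (y.1 + k2 • rho u v) = n := by
      rw [lcnt_shift, hk2r]
    have hxb : bcnt u v C i T (y.1 + k2 • rho u v) = bcnt u v C i T y.1 := bcnt_shift _ _
    refine ⟨⟨y.1 + k2 • rho u v, hxFre, by omega⟩, ?_⟩
    apply Subtype.ext
    set x : {x : Cyl u v // Fre u v C i T x ∧ lcnt u v C i T x < bcnt u v C i T x} :=
      ⟨y.1 + k2 • rho u v, hxFre, by omega⟩ with hxdef
    have hFH : FHSet u v C i T x.1 = {j : ℤ | k2 + j ∈ FHSet u v C i T y.1} :=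
      FHSet_shift _ _
    have hrk : rkf (FHSet u v C i T y.1) (k2 + kf x) = n := by
      have h := hk2 x
      rw [hFH, rkf_shift] at h
      rw [h]
      show lcnt u v C i T (y.1 + k2 • rho u v) = n
      exact hxl
    have hmem : k2 + kf x ∈ FHSet u v C i T y.1 := by
      have h := (hk1 x).1
      show k2 + kf x ∈ FHSet u v C i T y.1
      have : kf x ∈ FHSet u v C i T x.1 := ⟨(hk1 x).1, (hk1 x).2⟩
      rwa [hFH, Set.mem_setOf_eq] at this
    have hzz : k2 + kf x = 0 :=
      rkf_injOn (FHSet_finite hv' hC y.1) hmem h0FH (by rw [hrk, hn])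
    show x.1 + kf x • rho u v = y.1
    have : x.1 = y.1 + k2 • rho u v := rfl
    rw [this, shift_arg, hzz, zero_zsmul, add_zero]

lemma ncard_newlow_eq_freeHigh (hv' : 0 < v) (hC : IsCylShape u v C) (hT : CylOk u v C T) :
    {x : Cyl u v | Fre u v C i T x ∧ lcnt u v C i T x < bcnt u v C i T x}.ncard
      = {x : Cyl u v | Fre u v C i T x ∧ T x = i + 1}.ncard := by
  rw [← Nat.card_coe_set_eq, ← Nat.card_coe_set_eq]
  exact card_newlow_eq_freeHigh hv' hC hT

end BKcount

section Content
variable {u v : ℕ} {C : Set (Cyl u v)} {i : ℕ} {T : Cyl u v → ℕ}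

lemma fin_sub (hC : IsCylShape u v C) {P : Cyl u v → Prop} (h : ∀ x, P x → x ∈ C) :
    {x : Cyl u v | P x}.Finite :=
  hC.1.subset h

lemma ncard_BK_i (hv' : 0 < v) (hC : IsCylShape u v C) (hT : CylOk u v C T) :
    {x : Cyl u v | x ∈ C ∧ BK u v C i T x = i}.ncard
      = {x : Cyl u v | x ∈ C ∧ T x = i + 1}.ncard := by
  have E1 : {x : Cyl u v | x ∈ C ∧ BK u v C i T x = i}
      = {x | FixL u v C i T x} ∪ {x | Fre u v C i T x ∧ lcnt u v C i T x < bcnt u v C i T x} := by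
    ext x
    constructor
    · rintro ⟨hx, hbk⟩
      by_cases hf : Fre u v C i T x
      · exact Or.inr ⟨hf, (BK_free_eq_i_iff hf).1 hbk⟩
      · rw [BK_not_free hf] at hbk
        rcases status_i hx hbk with hs | hs
        · exact Or.inl hs
        · exact absurd hs hf
    · rintro (hs | ⟨hf, hl⟩)
      · exact ⟨hs.1, by rw [BK_not_free (FixL_not_Fre hs)]; exact hs.2.1⟩
      · exact ⟨hf.1, BK_free_low hf hl⟩
  have E2 : {x : Cyl u v | x ∈ C ∧ T x = i + 1}
      = {x | FixH u v C i T x} ∪ {x | Fre u v C i T x ∧ T x = i + 1} := by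
    ext x
    constructor
    · rintro ⟨hx, hval⟩
      rcases status_i1 hx hval with hs | hs
      · exact Or.inl hs
      · exact Or.inr ⟨hs, hval⟩
    · rintro (hs | ⟨hf, hval⟩)
      · exact ⟨hs.1, hs.2.1⟩
      · exact ⟨hf.1, hval⟩
  rw [E1, E2]
  rw [Set.ncard_union_eq (by
      rw [Set.disjoint_left]
      rintro x hx ⟨hf, -⟩
      exact FixL_not_Fre hx hf)
    (fin_sub hC (fun x hx => hx.1)) (fin_sub hC (fun x hx => hx.1.1)),
    Set.ncard_union_eq (by
      rw [Set.disjoint_left]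
      rintro x hx ⟨hf, -⟩
      exact FixH_not_Fre hx hf)
    (fin_sub hC (fun x hx => hx.1)) (fin_sub hC (fun x hx => hx.1.1)),
    ncard_FixL_eq_FixH, ncard_newlow_eq_freeHigh hv' hC hT]

lemma ncard_BK_i1 (hv' : 0 < v) (hC : IsCylShape u v C) (hT : CylOk u v C T) :
    {x : Cyl u v | x ∈ C ∧ BK u v C i T x = i + 1}.ncard
      = {x : Cyl u v | x ∈ C ∧ T x = i}.ncard := by
  have hpair : {x : Cyl u v | x ∈ C ∧ (BK u v C i T x = i ∨ BK u v C i T x = i + 1)}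
      = {x : Cyl u v | x ∈ C ∧ (T x = i ∨ T x = i + 1)} := by
    ext x
    constructor
    · rintro ⟨hx, hval⟩
      refine ⟨hx, ?_⟩
      by_cases hf : Fre u v C i T x
      · exact hf.2.1
      · rwa [BK_not_free hf] at hval
    · rintro ⟨hx, hval⟩
      refine ⟨hx, ?_⟩
      by_cases hf : Fre u v C i T x
      · exact BK_free_mem hf
      · rwa [BK_not_free hf]
  have split : ∀ S : Cyl u v → ℕ,
      {x : Cyl u v | x ∈ C ∧ (S x = i ∨ S x = i + 1)}.ncard
        = {x : Cyl u v | x ∈ C ∧ S x = i}.ncard + {x : Cyl u v | x ∈ C ∧ S x = i + 1}.ncard := by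
    intro S
    have hU : {x : Cyl u v | x ∈ C ∧ (S x = i ∨ S x = i + 1)}
        = {x : Cyl u v | x ∈ C ∧ S x = i} ∪ {x : Cyl u v | x ∈ C ∧ S x = i + 1} := by
      ext x
      constructor
      · rintro ⟨hx, h | h⟩
        · exact Or.inl ⟨hx, h⟩
        · exact Or.inr ⟨hx, h⟩
      · rintro (⟨hx, h⟩ | ⟨hx, h⟩) <;> exact ⟨hx, by tauto⟩
    rw [hU, Set.ncard_union_eq (by
        rw [Set.disjoint_left]
        rintro x ⟨-, h1⟩ ⟨-, h2⟩
        omega)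
      (fin_sub hC (fun x hx => hx.1)) (fin_sub hC (fun x hx => hx.1))]
  have h1 := split (BK u v C i T)
  have h2 := split T
  rw [hpair] at h1
  have h3 := ncard_BK_i hv' hC hT (i := i)
  omega

lemma ncard_BK_other (hT : CylOk u v C T) {w : ℕ} (hw : w ≠ i) (hw' : w ≠ i + 1) :
    {x : Cyl u v | x ∈ C ∧ BK u v C i T x = w}
      = {x : Cyl u v | x ∈ C ∧ T x = w} := by
  ext x
  have key : BK u v C i T x = w ↔ T x = w := by
    by_cases hf : Fre u v C i T x
    · have h1 := hf.2.1
      rcases BK_free_mem hf with h | h <;> rw [h] <;> omega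
    · rw [BK_not_free hf]
  rw [Set.mem_setOf_eq, Set.mem_setOf_eq, key]

lemma nat_card_sub (P : Cyl u v → Prop) :
    Nat.card {x : Cyl u v // P x} = {x : Cyl u v | P x}.ncard :=
  Nat.card_coe_set_eq {x : Cyl u v | P x}

lemma card_content (hv' : 0 < v) (hC : IsCylShape u v C) (hT : CylOk u v C T) (w : ℕ) :
    Nat.card {x : Cyl u v // x ∈ C ∧ BK u v C i T x = w}
      = Nat.card {x : Cyl u v // x ∈ C ∧ T x = Equiv.swap i (i + 1) w} := by
  rcases eq_or_ne w i with rfl | hwi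
  · rw [Equiv.swap_apply_left, nat_card_sub, nat_card_sub]
    exact ncard_BK_i hv' hC hT
  · rcases eq_or_ne w (i + 1) with rfl | hwi1
    · rw [Equiv.swap_apply_right, nat_card_sub, nat_card_sub]
      exact ncard_BK_i1 hv' hC hT
    · rw [Equiv.swap_apply_of_ne_of_ne hwi hwi1, nat_card_sub, nat_card_sub,
        ncard_BK_other hT hwi hwi1]

end Content

section Valid
variable {u v : ℕ} {C : Set (Cyl u v)}

def Valid (u v : ℕ) (C : Set (Cyl u v)) (d : ℕ → ℕ) (T : Cyl u v → ℕ) : Prop :=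
  CylOk u v C T ∧ (∀ x, x ∉ C → T x = 0) ∧
    ∀ w, Nat.card {x : Cyl u v // x ∈ C ∧ T x = w} = d w

lemma cylSchur_apply (e : ℕ →₀ ℕ) :
    (cylSchur u v C) e = (Nat.card {T : Cyl u v → ℕ // Valid u v C (⇑e) T} : ℚ) := rfl

lemma BK_valid (hv' : 0 < v) (hC : IsCylShape u v C) {i : ℕ} {d : ℕ → ℕ} {T : Cyl u v → ℕ}
    (h : Valid u v C d T) :
    Valid u v C (fun w => d (Equiv.swap i (i + 1) w)) (BK u v C i T) := by
  refine ⟨CylOk_BK hv' hC h.1, fun x hx => ?_, fun w => ?_⟩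
  · rw [BK_off hx]
    exact h.2.1 x hx
  · rw [card_content hv' hC h.1 w]
    exact h.2.2 _

lemma card_valid_swap (hv' : 0 < v) (hC : IsCylShape u v C) (i : ℕ) (d : ℕ → ℕ) :
    Nat.card {T : Cyl u v → ℕ // Valid u v C d T}
      = Nat.card {T : Cyl u v → ℕ //
          Valid u v C (fun w => d (Equiv.swap i (i + 1) w)) T} := by
  apply Nat.card_congr
  have hswapswap : ∀ (d' : ℕ → ℕ),
      (fun w => (fun w' => d' (Equiv.swap i (i + 1) w')) (Equiv.swap i (i + 1) w)) = d' := by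
    intro d'
    funext w
    simp [Equiv.swap_apply_self]
  refine ⟨fun X => ⟨BK u v C i X.1, BK_valid hv' hC X.2⟩,
    fun Y => ⟨BK u v C i Y.1, ?_⟩, fun X => ?_, fun Y => ?_⟩
  · have := BK_valid hv' hC (i := i) Y.2
    rwa [hswapswap d] at this
  · apply Subtype.ext
    exact funext (BK_invol hv' hC X.2.1)
  · apply Subtype.ext
    exact funext (BK_invol hv' hC Y.2.1)

end Valid

section Perm
variable {u v : ℕ} {C : Set (Cyl u v)}

def Phi (u v : ℕ) (C : Set (Cyl u v)) (σ : Equiv.Perm ℕ) : Prop :=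
  ∀ e : ℕ →₀ ℕ, (cylSchur u v C) (Finsupp.equivMapDomain (σ : ℕ ≃ ℕ) e) = (cylSchur u v C) e

lemma Phi_one : Phi u v C 1 := by
  intro e
  rw [show ((1 : Equiv.Perm ℕ) : ℕ ≃ ℕ) = Equiv.refl ℕ from rfl, Finsupp.equivMapDomain_refl]

lemma Phi_mul {σ τ : Equiv.Perm ℕ} (hσ : Phi u v C σ) (hτ : Phi u v C τ) :
    Phi u v C (σ * τ) := by
  intro e
  rw [show ((σ * τ : Equiv.Perm ℕ) : ℕ ≃ ℕ) = (τ : ℕ ≃ ℕ).trans σ from rfl,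
    Finsupp.equivMapDomain_trans]
  rw [hσ, hτ]

lemma Phi_swap_adj (hv' : 0 < v) (hC : IsCylShape u v C) (a : ℕ) :
    Phi u v C (Equiv.swap a (a + 1)) := by
  intro e
  have hfe : ⇑(Finsupp.equivMapDomain (Equiv.swap a (a + 1)) e)
      = fun w => e (Equiv.swap a (a + 1) w) := by
    funext w
    rw [Finsupp.equivMapDomain_apply, Equiv.symm_swap]
  rw [cylSchur_apply, cylSchur_apply, hfe]
  exact_mod_cast congrArg (Nat.cast (R := ℚ)) (card_valid_swap hv' hC a ⇑e).symm

lemma Phi_swap (hv' : 0 < v) (hC : IsCylShape u v C) (a b : ℕ) :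
    Phi u v C (Equiv.swap a b) := by
  have key : ∀ (d a : ℕ), Phi u v C (Equiv.swap a (a + d)) := by
    intro d
    induction d with
    | zero =>
      intro a
      rw [Nat.add_zero, Equiv.swap_self]
      exact Phi_one
    | succ n ih =>
      intro a
      match n, ih with
      | 0, _ => exact Phi_swap_adj hv' hC a
      | (m + 1), ih =>
        have hid : Equiv.swap (a + (m + 1)) (a + (m + 1) + 1)
            * Equiv.swap a (a + (m + 1)) * Equiv.swap (a + (m + 1)) (a + (m + 1) + 1)
            = Equiv.swap (a + (m + 1) + 1) a := by
          apply Equiv.swap_mul_swap_mul_swap (by omega) (by omega)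
        have h2 : Equiv.swap a (a + (m + 1 + 1)) = Equiv.swap (a + (m + 1) + 1) a := by
          rw [show a + (m + 1 + 1) = a + (m + 1) + 1 from by omega, Equiv.swap_comm]
        rw [h2, ← hid]
        exact Phi_mul (Phi_mul (Phi_swap_adj hv' hC _) (ih a)) (Phi_swap_adj hv' hC _)
  rcases le_total a b with h | h
  · have : b = a + (b - a) := by omega
    rw [this]
    exact key _ _
  · have : a = b + (a - b) := by omega
    rw [Equiv.swap_comm, this]
    exact key _ _

lemma exists_ext (P : Equiv.Perm ℕ → Prop) (h1 : P 1)
    (hmul : ∀ σ τ, P σ → P τ → P (σ * τ)) (hswap : ∀ a b, P (Equiv.swap a b))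
    (s : Finset ℕ) (g : Equiv.Perm ℕ) :
    ∃ σ : Equiv.Perm ℕ, P σ ∧ ∀ x ∈ s, σ x = g x := by
  classical
  induction s using Finset.induction_on with
  | empty => exact ⟨1, h1, by simp⟩
  | @insert a s ha ih =>
    obtain ⟨σ', hP', hagr⟩ := ih
    refine ⟨Equiv.swap (σ' a) (g a) * σ', hmul _ _ (hswap _ _) hP', ?_⟩
    intro x hx
    rcases Finset.mem_insert.1 hx with rfl | hxs
    · rw [Equiv.Perm.mul_apply, Equiv.swap_apply_left]
    · rw [Equiv.Perm.mul_apply, hagr x hxs]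
      apply Equiv.swap_apply_of_ne_of_ne
      · intro hgx
        have : σ' x = σ' a := by rw [hagr x hxs, hgx]
        have hxa : x = a := σ'.injective this
        exact ha (hxa ▸ hxs)
      · intro hgx
        have hxa : x = a := g.injective hgx
        exact ha (hxa ▸ hxs)

end Perm
end BKproof

/-- For any cylindric skew shape `C`, the cylindric skew Schur function `s_C(x)` is a
symmetric function: its coefficients are invariant under any permutation of the variables. -/
theorem stmt4 (u v : ℕ) (hu : 0 < u) (hv : 0 < v) (C : Set (Cyl u v))
    (hC : IsCylShape u v C) (g : Equiv.Perm ℕ) (e : ℕ →₀ ℕ) :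
    MvPowerSeries.coeff (Finsupp.equivMapDomain g e) (cylSchur u v C) =
      MvPowerSeries.coeff e (cylSchur u v C) := by
  obtain ⟨σ, hPσ, hagree⟩ := BKproof.exists_ext (BKproof.Phi u v C) BKproof.Phi_one
    (fun σ τ hσ hτ => BKproof.Phi_mul hσ hτ) (BKproof.Phi_swap hv hC) e.support g
  have hemd : Finsupp.equivMapDomain (g : ℕ ≃ ℕ) e = Finsupp.equivMapDomain (σ : ℕ ≃ ℕ) e := by
    ext w
    rw [Finsupp.equivMapDomain_apply, Finsupp.equivMapDomain_apply]
    by_cases h : g.symm w ∈ e.support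
    · have h1 : σ (g.symm w) = w := by
        rw [hagree _ h]
        exact g.apply_symm_apply w
      have h2 : σ.symm w = g.symm w := by
        rw [Equiv.symm_apply_eq, h1]
      rw [h2]
    · rw [Finsupp.notMem_support_iff.1 h]
      by_contra hne
      have hs : σ.symm w ∈ e.support := Finsupp.mem_support_iff.2 (fun h0 => hne h0.symm)
      have h1 : g (σ.symm w) = w := by
        rw [← hagree _ hs]
        exact σ.apply_symm_apply w
      have h2 : g.symm w = σ.symm w := by
        rw [Equiv.symm_apply_eq, h1]
      exact h (h2 ▸ hs)
  rw [show MvPowerSeries.coeff (Finsupp.equivMapDomain (g : ℕ ≃ ℕ) e) (cylSchur u v C)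
      = (cylSchur u v C) (Finsupp.equivMapDomain (g : ℕ ≃ ℕ) e) from rfl, hemd]
  exact hPσ e
end
end

section
/- The cylindric skew Schur function of the cylindric hook H^{n-k}_k satisfies s_{H^{n-k}_k} = Σ_{j=0}^{n-k-1} (-1)^j s_{(n-k-j, 1^{k+j})}, i.e., s_{(n-k,1^k)} - s_{(n-k-1,1^{k+1})} + ... + (-1)^{n-k-1} s_{(1^n)}, an alternating sum of hook Schur functions. -/
open scoped Classical
open Relation

noncomputable section

/-- Edgewise adjacency in `ℤ × ℤ`. -/
def adjZ (a b : ℤ × ℤ) : Prop :=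
  b = (a.1 + 1, a.2) ∨ a = (b.1 + 1, b.2) ∨ b = (a.1, a.2 + 1) ∨ a = (b.1, b.2 + 1)

/-- The full preimage of `C` in `ℤ × ℤ` under the quotient map. -/
def preimg (u v : ℕ) (C : Set (Cyl u v)) : Set (ℤ × ℤ) := {a | cmk u v a ∈ C}

/-- A cylindric ribbon: a cylindric skew shape which, viewed as a subset of `ℤ²`,
is edgewise connected and contains no `2 × 2` block of boxes. -/
def IsCylRibbon (u v : ℕ) (C : Set (Cyl u v)) : Prop :=
  IsCylShape u v C ∧ C.Nonempty ∧
  (∀ a b, a ∈ preimg u v C → b ∈ preimg u v C →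
    Relation.ReflTransGen (fun p q => q ∈ preimg u v C ∧ adjZ p q) a b) ∧
  ¬ ∃ a : ℤ × ℤ, a ∈ preimg u v C ∧ (a.1 + 1, a.2) ∈ preimg u v C ∧
      (a.1, a.2 + 1) ∈ preimg u v C ∧ (a.1 + 1, a.2 + 1) ∈ preimg u v C

/-- The hook partition `(a, 1^b)`. -/
def hookFun (a b : ℕ) : ℕ → ℕ := fun i => if i = 0 then a else if i ≤ b then 1 else 0

set_option maxHeartbeats 1000000

namespace Aux

/-- push a filling along a cell bijection -/
def pushT {X Y : Type} (S : Set X) (S' : Set Y) (σ : ↥S ≃ ↥S') (T : X → ℕ) : Y → ℕ :=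
  fun y => if h : y ∈ S' then T (σ.symm ⟨y, h⟩) else 0

lemma pushT_pullT {X Y : Type} (S : Set X) (S' : Set Y) (σ : ↥S ≃ ↥S') (T' : Y → ℕ)
    (h : ∀ y ∉ S', T' y = 0) : pushT S S' σ (pushT S' S σ.symm T') = T' := by
  funext y
  by_cases hy : y ∈ S'
  · simp only [pushT, dif_pos hy]
    rw [dif_pos (σ.symm ⟨y, hy⟩).2]
    congr 1
    simp
  · simp only [pushT, dif_neg hy]
    exact (h y hy).symm

/-- content is preserved by pushing -/
lemma pushT_card {X Y : Type} (S : Set X) (S' : Set Y) (σ : ↥S ≃ ↥S') (T : X → ℕ) (w : ℕ) :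
    Nat.card {y : Y // y ∈ S' ∧ pushT S S' σ T y = w} = Nat.card {x : X // x ∈ S ∧ T x = w} := by
  apply Nat.card_congr
  refine ⟨fun p => ⟨(σ.symm ⟨p.1, p.2.1⟩ : X), (σ.symm ⟨p.1, p.2.1⟩).2, ?_⟩,
          fun q => ⟨(σ ⟨q.1, q.2.1⟩ : Y), (σ ⟨q.1, q.2.1⟩).2, ?_⟩, ?_, ?_⟩
  · have := p.2.2
    simpa only [pushT, dif_pos p.2.1] using this
  · have h' : (σ ⟨q.1, q.2.1⟩ : Y) ∈ S' := (σ ⟨q.1, q.2.1⟩).2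
    simp only [pushT, dif_pos h']
    have : (⟨(σ ⟨q.1, q.2.1⟩ : Y), h'⟩ : ↥S') = σ ⟨q.1, q.2.1⟩ := rfl
    rw [this, Equiv.symm_apply_apply]
    exact q.2.2
  · intro p; ext; simp
  · intro q; ext; simp

lemma pushT_at {X Y : Type} (S : Set X) (S' : Set Y) (σ : ↥S ≃ ↥S') (T : X → ℕ) (p : ↥S) :
    pushT S S' σ T (σ p : ↥S') = T p := by
  simp only [pushT]
  rw [dif_pos (σ p).2]
  have e : (⟨(σ p : Y), (σ p).2⟩ : ↥S') = σ p := rfl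
  rw [e, Equiv.symm_apply_apply]

lemma tabSeries_transport {X Y : Type} (S : Set X) (S' : Set Y)
    (Ok : (X → ℕ) → Prop) (Ok' : (Y → ℕ) → Prop) (σ : ↥S ≃ ↥S')
    (hOk : ∀ T, (∀ x ∉ S, T x = 0) → (Ok T ↔ Ok' (pushT S S' σ T))) :
    tabSeries S Ok = tabSeries S' Ok' := by
  funext e
  unfold tabSeries
  norm_cast
  apply Nat.card_congr
  have hOk' : ∀ T', (∀ y ∉ S', T' y = 0) → (Ok' T' ↔ Ok (pushT S' S σ.symm T')) := by
    intro T' hsupp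
    have h1 := hOk (pushT S' S σ.symm T') (fun x hx => dif_neg hx)
    rw [pushT_pullT S S' σ T' hsupp] at h1
    exact h1.symm
  refine ⟨fun p => ⟨pushT S S' σ p.1, ?_, fun y hy => dif_neg hy, ?_⟩,
          fun q => ⟨pushT S' S σ.symm q.1, ?_, fun x hx => dif_neg hx, ?_⟩, ?_, ?_⟩
  · exact (hOk p.1 p.2.2.1).mp p.2.1
  · intro w; rw [pushT_card]; exact p.2.2.2 w
  · exact (hOk' q.1 q.2.2.1).mp q.2.1
  · intro w; rw [pushT_card]; exact q.2.2.2 w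
  · intro p; ext1
    exact pushT_pullT S' S σ.symm p.1 p.2.2.1
  · intro q; ext1
    exact pushT_pullT S S' σ q.1 q.2.2.1

lemma tabSeries_congr {X : Type} (S : Set X) (Ok Ok' : (X → ℕ) → Prop)
    (h : ∀ T, (∀ x ∉ S, T x = 0) → (Ok T ↔ Ok' T)) :
    tabSeries S Ok = tabSeries S Ok' := by
  funext e
  unfold tabSeries
  norm_cast
  apply Nat.card_congr
  exact Equiv.subtypeEquivRight (fun T => by
    constructor
    · rintro ⟨h1, h2, h3⟩; exact ⟨(h T h2).mp h1, h2, h3⟩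
    · rintro ⟨h1, h2, h3⟩; exact ⟨(h T h2).mpr h1, h2, h3⟩)

lemma tab_finite {X : Type} (S : Set X) (hS : S.Finite) (Ok : (X → ℕ) → Prop) (e : ℕ →₀ ℕ) :
    Finite {T : X → ℕ //
      Ok T ∧ (∀ x, x ∉ S → T x = 0) ∧ ∀ v, Nat.card {x : X // x ∈ S ∧ T x = v} = e v} := by
  haveI := hS.to_subtype
  have key : ∀ (p : {T : X → ℕ //
      Ok T ∧ (∀ x, x ∉ S → T x = 0) ∧ ∀ v, Nat.card {x : X // x ∈ S ∧ T x = v} = e v})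
      (x : X), x ∈ S → p.1 x ∈ e.support := by
    rintro ⟨T, _, _, hcont⟩ x hx
    haveI : Finite {x' : X // x' ∈ S ∧ T x' = T x} :=
      Finite.of_injective (fun q => (⟨q.1, q.2.1⟩ : ↥S)) (by
        intro a b hab
        simp only [Subtype.mk.injEq] at hab
        exact Subtype.ext hab)
    have hpos : 0 < Nat.card {x' : X // x' ∈ S ∧ T x' = T x} :=
      Nat.card_pos_iff.mpr ⟨⟨⟨x, hx, rfl⟩⟩, inferInstance⟩
    rw [hcont (T x)] at hpos
    exact Finsupp.mem_support_iff.mpr hpos.ne'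
  apply Finite.of_injective (fun p => (fun x : ↥S => (⟨p.1 x, key p x x.2⟩ : ↥(e.support : Finset ℕ))))
  intro p q hpq
  ext1; funext x
  by_cases hx : x ∈ S
  · have := congrFun hpq ⟨x, hx⟩
    exact congrArg Subtype.val this
  · rw [p.2.2.1 x hx, q.2.2.1 x hx]

lemma tabSeries_split {X : Type} (S : Set X) (hS : S.Finite)
    (Ok Ok1 Ok2 : (X → ℕ) → Prop)
    (h12 : ∀ T, (∀ x ∉ S, T x = 0) → (Ok T ↔ (Ok1 T ∨ Ok2 T)))
    (hdisj : ∀ T, ¬(Ok1 T ∧ Ok2 T)) :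
    tabSeries S Ok = tabSeries S Ok1 + tabSeries S Ok2 := by
  funext e
  show (Nat.card _ : ℚ) = (Nat.card _ : ℚ) + (Nat.card _ : ℚ)
  haveI h1 := tab_finite S hS Ok1 e
  haveI h2 := tab_finite S hS Ok2 e
  rw [← Nat.cast_add]
  norm_cast
  rw [← Nat.card_sum]
  apply Nat.card_congr
  refine ⟨fun p => if h : Ok1 p.1 then Sum.inl ⟨p.1, h, p.2.2⟩ else
            Sum.inr ⟨p.1, ((h12 p.1 p.2.2.1).mp p.2.1).resolve_left h, p.2.2⟩,
          fun q => q.elim (fun a => ⟨a.1, (h12 a.1 a.2.2.1).mpr (.inl a.2.1), a.2.2⟩)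
                          (fun b => ⟨b.1, (h12 b.1 b.2.2.1).mpr (.inr b.2.1), b.2.2⟩), ?_, ?_⟩
  · intro p
    by_cases h : Ok1 p.1
    · simp only [dif_pos h, Sum.elim_inl]
    · simp only [dif_neg h, Sum.elim_inr]
  · rintro (a | b)
    · simp only [Sum.elim_inl]
      exact dif_pos a.2.1
    · simp only [Sum.elim_inr]
      exact dif_neg (fun h => hdisj b.1 ⟨h, b.2.1⟩)


def gv (u v : ℕ) : ℤ × ℤ := (-(u:ℤ), (v:ℤ))

lemma smul_prod' (t : ℤ) (a : ℤ × ℤ) : t • a = (t * a.1, t * a.2) := by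
  simp [Prod.smul_def, zsmul_eq_mul]

lemma add_smul_gv_fst (u v : ℕ) (a : ℤ × ℤ) (t : ℤ) :
    (a + t • gv u v).1 = a.1 - t * u := by
  rw [Prod.fst_add, smul_prod']
  show a.1 + t * (-(u:ℤ)) = _
  ring

lemma add_smul_gv_snd (u v : ℕ) (a : ℤ × ℤ) (t : ℤ) :
    (a + t • gv u v).2 = a.2 + t * v := by
  rw [Prod.snd_add, smul_prod']
  rfl

lemma cmk_add (u v : ℕ) (a b : ℤ × ℤ) : cmk u v (a + b) = cmk u v a + cmk u v b := rfl

lemma cmk_eq_iff (u v : ℕ) (a b : ℤ × ℤ) :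
    cmk u v a = cmk u v b ↔ ∃ t : ℤ, b = a + t • gv u v := by
  show QuotientAddGroup.mk a = QuotientAddGroup.mk b ↔ _
  rw [QuotientAddGroup.eq]
  constructor
  · intro h
    obtain ⟨t, ht⟩ := AddSubgroup.mem_zmultiples_iff.mp h
    refine ⟨t, ?_⟩
    show b = a + t • ((-(u:ℤ), (v:ℤ)) : ℤ × ℤ)
    rw [ht]; abel
  · rintro ⟨t, rfl⟩
    refine AddSubgroup.mem_zmultiples_iff.mpr ⟨t, ?_⟩
    show t • ((-(u:ℤ), (v:ℤ)) : ℤ × ℤ) = -a + (a + t • ((-(u:ℤ), (v:ℤ)) : ℤ × ℤ))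
    abel

lemma cmk_shift (u v : ℕ) (a : ℤ × ℤ) (t : ℤ) : cmk u v (a + t • gv u v) = cmk u v a :=
  ((cmk_eq_iff u v a _).mpr ⟨t, rfl⟩).symm

lemma cmk_surj (u v : ℕ) (x : Cyl u v) : ∃ a, x = cmk u v a := by
  obtain ⟨a, ha⟩ := Quotient.exists_rep x
  exact ⟨a, ha.symm⟩

lemma cle_iff (u v : ℕ) (a b : ℤ × ℤ) :
    cle u v (cmk u v a) (cmk u v b) ↔
      ∃ t : ℤ, a.1 ≤ b.1 - t * u ∧ a.2 ≤ b.2 + t * v := by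
  constructor
  · rintro ⟨a', b', ha, hb, h1, h2⟩
    obtain ⟨s, rfl⟩ := (cmk_eq_iff u v a a').mp ha
    obtain ⟨r, rfl⟩ := (cmk_eq_iff u v b b').mp hb
    rw [add_smul_gv_fst, add_smul_gv_fst] at h1
    rw [add_smul_gv_snd, add_smul_gv_snd] at h2
    refine ⟨r - s, ?_, ?_⟩
    · have : (r - s) * (u:ℤ) = r*u - s*u := by ring
      rw [this]; linarith
    · have : (r - s) * (v:ℤ) = r*v - s*v := by ring
      rw [this]; linarith
  · rintro ⟨t, h1, h2⟩
    refine ⟨a, b + t • gv u v, rfl, (cmk_shift u v b t).symm, ?_, ?_⟩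
    · rw [add_smul_gv_fst]; linarith
    · rw [add_smul_gv_snd]; linarith

lemma cle_refl (u v : ℕ) (x : Cyl u v) : cle u v x x := by
  obtain ⟨a, rfl⟩ := cmk_surj u v x
  exact ⟨a, a, rfl, rfl, le_refl _, le_refl _⟩

lemma cle_trans (u v : ℕ) {x y z : Cyl u v} (h1 : cle u v x y) (h2 : cle u v y z) :
    cle u v x z := by
  obtain ⟨a, b, rfl, rfl, hab1, hab2⟩ := h1
  obtain ⟨b', c, hb, rfl, hbc1, hbc2⟩ := h2
  obtain ⟨t, rfl⟩ := (cmk_eq_iff u v b b').mp hb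
  rw [add_smul_gv_fst] at hbc1
  rw [add_smul_gv_snd] at hbc2
  refine ⟨a + t • gv u v, c, (cmk_shift u v a t).symm, rfl, ?_, ?_⟩
  · rw [add_smul_gv_fst]; linarith
  · rw [add_smul_gv_snd]; linarith

lemma cle_antisymm (u v : ℕ) (hu : 0 < u) (hv : 0 < v) {x y : Cyl u v}
    (h1 : cle u v x y) (h2 : cle u v y x) : x = y := by
  obtain ⟨a, rfl⟩ := cmk_surj u v x
  obtain ⟨b, rfl⟩ := cmk_surj u v y
  obtain ⟨t, ht1, ht2⟩ := (cle_iff u v a b).mp h1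
  obtain ⟨s, hs1, hs2⟩ := (cle_iff u v b a).mp h2
  have hu' : (0:ℤ) < u := by exact_mod_cast hu
  have hv' : (0:ℤ) < v := by exact_mod_cast hv
  have hst : s + t = 0 := by
    rcases lt_trichotomy (s + t) 0 with h | h | h
    · nlinarith
    · exact h
    · nlinarith
  rw [cmk_eq_iff]
  refine ⟨-t, ?_⟩
  have e1 : (a + (-t) • gv u v).1 = a.1 + t*u := by rw [add_smul_gv_fst]; ring
  have e2 : (a + (-t) • gv u v).2 = a.2 - t*v := by rw [add_smul_gv_snd]; ring
  have hs' : s = -t := by linarith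
  have es1 : s*(u:ℤ) = -(t*u) := by rw [hs']; ring
  have es2 : s*(v:ℤ) = -(t*v) := by rw [hs']; ring
  rw [es1] at hs1
  rw [es2] at hs2
  rw [Prod.ext_iff]
  exact ⟨by rw [e1]; linarith, by rw [e2]; linarith⟩

lemma preimg_mem (u v : ℕ) (C : Set (Cyl u v)) (a : ℤ × ℤ) :
    a ∈ preimg u v C ↔ cmk u v a ∈ C := Iff.rfl

lemma preimg_shift (u v : ℕ) (C : Set (Cyl u v)) (a : ℤ × ℤ) (t : ℤ) :
    a + t • gv u v ∈ preimg u v C ↔ a ∈ preimg u v C := by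
  rw [preimg_mem, preimg_mem, cmk_shift]

/-- rectangle lemma -/
lemma rect_mem (u v : ℕ) (C : Set (Cyl u v)) (hC : IsCylShape u v C)
    {a b : ℤ × ℤ} (ha : a ∈ preimg u v C) (hb : b ∈ preimg u v C) {c : ℤ × ℤ}
    (h1 : a.1 ≤ c.1) (h2 : a.2 ≤ c.2) (h3 : c.1 ≤ b.1) (h4 : c.2 ≤ b.2) :
    c ∈ preimg u v C :=
  hC.2 (cmk u v a) (cmk u v c) (cmk u v b)
    ⟨a, c, rfl, rfl, h1, h2⟩ ⟨c, b, rfl, rfl, h3, h4⟩ ha hb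

/-- no fat rectangles -/
lemma star (u v : ℕ) (C : Set (Cyl u v)) (hC : IsCylRibbon u v C)
    {a b : ℤ × ℤ} (ha : a ∈ preimg u v C) (hb : b ∈ preimg u v C)
    (h1 : a.1 ≤ b.1) (h2 : a.2 ≤ b.2) : a.1 = b.1 ∨ a.2 = b.2 := by
  by_contra h
  push_neg at h
  have hx : a.1 + 1 ≤ b.1 := by omega
  have hy : a.2 + 1 ≤ b.2 := by omega
  apply hC.2.2.2
  refine ⟨a, ha, ?_, ?_, ?_⟩
  · exact rect_mem u v C hC.1 ha hb (by simp) (by simp) hx h2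
  · exact rect_mem u v C hC.1 ha hb (by simp) (by simp) h1 hy
  · exact rect_mem u v C hC.1 ha hb (by simp) (by simp) hx hy


/-- The standard cylindric hook preimage: the union over `t` of translates by `t•gv` of the
hook with arm `[0,u] × {0}` and leg `{0} × [0,v]`. -/
def P0 (u v : ℕ) : Set (ℤ × ℤ) :=
  {a | ∃ t : ℤ, (a.2 = t*v ∧ -(t*u) ≤ a.1 ∧ a.1 ≤ -(t*u) + u) ∨
                (a.1 = -(t*u) ∧ t*v ≤ a.2 ∧ a.2 ≤ t*v + v)}

lemma smul_gv_eq (u v : ℕ) (t : ℤ) : t • gv u v = (-(t*(u:ℤ)), t*(v:ℤ)) := by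
  rw [smul_prod']
  show (t * -(u:ℤ), t * (v:ℤ)) = _
  rw [Prod.mk.injEq]
  constructor
  · ring
  · rfl

theorem classification (u v : ℕ) (hu : 0 < u) (hv : 0 < v) (C : Set (Cyl u v))
    (hC : IsCylRibbon u v C) (h0 : ((0:ℤ), (0:ℤ)) ∈ preimg u v C)
    (H2 : ∀ a ∈ preimg u v C, ∃ t : ℤ, -(t*(u:ℤ)) ≤ a.1 ∧ t*(v:ℤ) ≤ a.2) :
    preimg u v C = P0 u v := by
  have hu' : (0:ℤ) < u := by exact_mod_cast hu
  have hv' : (0:ℤ) < v := by exact_mod_cast hv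
  set P := preimg u v C with hP
  -- shift invariance in concrete coordinates
  have key : ∀ (a : ℤ × ℤ) (t : ℤ), ((a.1 + t*u, a.2 - t*v) : ℤ × ℤ) ∈ P ↔ a ∈ P := by
    intro a t
    have h1 : ((a.1 + t*u, a.2 - t*v) : ℤ × ℤ) = a + (-t) • gv u v := by
      rw [smul_gv_eq, Prod.mk.injEq]
      constructor
      · rw [Prod.fst_add]; show _ = a.1 + -(-t * u); ring
      · rw [Prod.snd_add]; show _ = a.2 + (-t * v); ring
    rw [h1]
    exact preimg_shift u v C a (-t)
  have hgmem : ∀ t : ℤ, ((-(t*(u:ℤ)), t*(v:ℤ)) : ℤ × ℤ) ∈ P := by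
    intro t
    have := (key (-(t*(u:ℤ)), t*(v:ℤ)) t).mpr
    apply (key _ t).mp
    show ((-(t*(u:ℤ)) + t*u, t*(v:ℤ) - t*v) : ℤ × ℤ) ∈ P
    have : ((-(t*(u:ℤ)) + t*u, t*(v:ℤ) - t*v) : ℤ × ℤ) = ((0:ℤ), (0:ℤ)) := by
      rw [Prod.mk.injEq]; constructor <;> ring
    rw [this]; exact h0
  have struct : ∀ a ∈ P, ∃ t : ℤ,
      (a.2 = t*v ∧ -(t*(u:ℤ)) ≤ a.1) ∨ (a.1 = -(t*(u:ℤ)) ∧ t*(v:ℤ) ≤ a.2) := by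
    intro a ha
    obtain ⟨t, h1, h2⟩ := H2 a ha
    rcases star u v C hC (hgmem t) ha h1 h2 with h | h
    · exact ⟨t, Or.inr ⟨h.symm, h2⟩⟩
    · exact ⟨t, Or.inl ⟨h.symm, h1⟩⟩
  -- the maximal arm and leg extents
  have hRA : ({x : ℕ | (((x:ℤ), (0:ℤ)) : ℤ × ℤ) ∈ P}).Finite := by
    apply Set.Finite.of_finite_image (f := fun x : ℕ => cmk u v ((x:ℤ), 0))
    · apply Set.Finite.subset hC.1.1
      rintro y ⟨x, hx, rfl⟩
      exact hx
    · intro x hx x' hx' hxx'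
      obtain ⟨t, ht⟩ := (cmk_eq_iff u v _ _).mp hxx'
      have h2 := congrArg Prod.snd ht
      rw [add_smul_gv_snd] at h2
      simp only [] at h2
      have ht0 : t = 0 := by
        have : (0:ℤ) = 0 + t * v := h2
        have htv : t * (v:ℤ) = 0 := by linarith
        rcases mul_eq_zero.mp htv with h | h
        · exact h
        · exfalso; omega
      have h1 := congrArg Prod.fst ht
      rw [add_smul_gv_fst, ht0] at h1
      simp only [zero_mul, sub_zero] at h1
      exact_mod_cast h1.symm
  have hCB : ({y : ℕ | (((0:ℤ), (y:ℤ)) : ℤ × ℤ) ∈ P}).Finite := by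
    apply Set.Finite.of_finite_image (f := fun y : ℕ => cmk u v (0, (y:ℤ)))
    · apply Set.Finite.subset hC.1.1
      rintro y ⟨x, hx, rfl⟩
      exact hx
    · intro y hy y' hy' hyy'
      obtain ⟨t, ht⟩ := (cmk_eq_iff u v _ _).mp hyy'
      have h1 := congrArg Prod.fst ht
      rw [add_smul_gv_fst] at h1
      simp only [] at h1
      have ht0 : t = 0 := by
        have : (0:ℤ) = 0 - t * u := h1
        have htv : t * (u:ℤ) = 0 := by linarith
        rcases mul_eq_zero.mp htv with h | h
        · exact h
        · exfalso; omega
      have h2 := congrArg Prod.snd ht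
      rw [add_smul_gv_snd, ht0] at h2
      simp only [zero_mul, add_zero] at h2
      exact_mod_cast h2.symm
  have h0A : (0:ℕ) ∈ {x : ℕ | (((x:ℤ), (0:ℤ)) : ℤ × ℤ) ∈ P} := by
    show (((0:ℕ):ℤ), (0:ℤ)) ∈ P
    norm_num
    exact h0
  have h0B : (0:ℕ) ∈ {y : ℕ | (((0:ℤ), (y:ℤ)) : ℤ × ℤ) ∈ P} := by
    show ((0:ℤ), ((0:ℕ):ℤ)) ∈ P
    norm_num
    exact h0
  obtain ⟨A, hAmem, hAub⟩ : ∃ A : ℕ, ((((A:ℕ):ℤ), (0:ℤ)) : ℤ × ℤ) ∈ P ∧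
      ∀ x : ℕ, ((((x:ℕ):ℤ), (0:ℤ)) : ℤ × ℤ) ∈ P → x ≤ A := by
    have hne : hRA.toFinset.Nonempty := ⟨0, (Set.Finite.mem_toFinset _).mpr h0A⟩
    refine ⟨hRA.toFinset.max' hne, ?_, ?_⟩
    · have h := hRA.toFinset.max'_mem hne
      rw [Set.Finite.mem_toFinset] at h
      exact h
    · intro x hx
      exact hRA.toFinset.le_max' x ((Set.Finite.mem_toFinset _).mpr hx)
  obtain ⟨B, hBmem, hBub⟩ : ∃ B : ℕ, (((0:ℤ), ((B:ℕ):ℤ)) : ℤ × ℤ) ∈ P ∧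
      ∀ y : ℕ, (((0:ℤ), ((y:ℕ):ℤ)) : ℤ × ℤ) ∈ P → y ≤ B := by
    have hne : hCB.toFinset.Nonempty := ⟨0, (Set.Finite.mem_toFinset _).mpr h0B⟩
    refine ⟨hCB.toFinset.max' hne, ?_, ?_⟩
    · have h := hCB.toFinset.max'_mem hne
      rw [Set.Finite.mem_toFinset] at h
      exact h
    · intro y hy
      exact hCB.toFinset.le_max' y ((Set.Finite.mem_toFinset _).mpr hy)
  have hrow_le : ∀ x : ℤ, 0 ≤ x → (((x, (0:ℤ)) : ℤ × ℤ) ∈ P) → x ≤ A := by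
    intro x hx hmem
    have h1 : ((x.toNat : ℤ), (0:ℤ)) ∈ P := by rwa [Int.toNat_of_nonneg hx]
    have := hAub x.toNat h1
    omega
  have hcol_le : ∀ y : ℤ, 0 ≤ y → ((((0:ℤ), y) : ℤ × ℤ) ∈ P) → y ≤ B := by
    intro y hy hmem
    have h1 : ((0:ℤ), (y.toNat : ℤ)) ∈ P := by rwa [Int.toNat_of_nonneg hy]
    have := hBub y.toNat h1
    omega
  have hrowseg : ∀ x : ℤ, 0 ≤ x → x ≤ A → ((x, (0:ℤ)) : ℤ × ℤ) ∈ P := by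
    intro x h1 h2
    refine rect_mem u v C hC.1 h0 hAmem (c := (x, (0:ℤ))) ?_ ?_ ?_ ?_
    · show (0:ℤ) ≤ x; exact h1
    · show (0:ℤ) ≤ 0; norm_num
    · show x ≤ (A:ℤ); exact h2
    · show (0:ℤ) ≤ 0; norm_num
  have hcolseg : ∀ y : ℤ, 0 ≤ y → y ≤ B → (((0:ℤ), y) : ℤ × ℤ) ∈ P := by
    intro y h1 h2
    refine rect_mem u v C hC.1 h0 hBmem (c := ((0:ℤ), y)) ?_ ?_ ?_ ?_
    · show (0:ℤ) ≤ 0; norm_num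
    · show (0:ℤ) ≤ y; exact h1
    · show (0:ℤ) ≤ 0; norm_num
    · show y ≤ (B:ℤ); exact h2
  -- refined structure with extents
  have struct2 : ∀ a ∈ P, ∃ t : ℤ,
      (a.2 = t*v ∧ -(t*(u:ℤ)) ≤ a.1 ∧ a.1 ≤ -(t*(u:ℤ)) + A) ∨
      (a.1 = -(t*(u:ℤ)) ∧ t*(v:ℤ) ≤ a.2 ∧ a.2 ≤ t*(v:ℤ) + B) := by
    intro a ha
    obtain ⟨t, h⟩ := struct a ha
    rcases h with ⟨h1, h2⟩ | ⟨h1, h2⟩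
    · refine ⟨t, Or.inl ⟨h1, h2, ?_⟩⟩
      have hx : ((a.1 + t*u, a.2 - t*v) : ℤ × ℤ) ∈ P := (key a t).mpr ha
      rw [h1] at hx
      have hx' : ((a.1 + t*u, (0:ℤ)) : ℤ × ℤ) ∈ P := by
        have : t*(v:ℤ) - t*v = 0 := by ring
        rwa [this] at hx
      have := hrow_le (a.1 + t*u) (by linarith) hx'
      linarith
    · refine ⟨t, Or.inr ⟨h1, h2, ?_⟩⟩
      have hx : ((a.1 + t*u, a.2 - t*v) : ℤ × ℤ) ∈ P := (key a t).mpr ha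
      rw [h1] at hx
      have hx' : (((0:ℤ), a.2 - t*v) : ℤ × ℤ) ∈ P := by
        have : -(t*(u:ℤ)) + t*u = 0 := by ring
        rwa [this] at hx
      have := hcol_le (a.2 - t*v) (by linarith) hx'
      linarith
  -- upper bounds on the extents
  have h11 : (((1:ℤ), (1:ℤ)) : ℤ × ℤ) ∈ P → False := by
    intro hmem
    rcases star u v C hC h0 hmem (by norm_num) (by norm_num) with h | h <;> simp at h
  have hA_le : (A:ℤ) ≤ u := by
    by_contra hcon
    push_neg at hcon
    have h1 : (((u:ℤ)+1, (0:ℤ)) : ℤ × ℤ) ∈ P := hrowseg _ (by positivity) (by linarith)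
    have h2 : (((1:ℤ), (v:ℤ)) : ℤ × ℤ) ∈ P := by
      have := (key ((1:ℤ), (v:ℤ)) 1).mp
      apply this
      have : (((1:ℤ) + 1*u, (v:ℤ) - 1*v) : ℤ × ℤ) = (((u:ℤ)+1), (0:ℤ)) := by
        rw [Prod.mk.injEq]; constructor <;> ring
      rw [this]; exact h1
    have h3 : (((1:ℤ), (0:ℤ)) : ℤ × ℤ) ∈ P := hrowseg _ (by norm_num) (by linarith)
    refine h11 (rect_mem u v C hC.1 h3 h2 (c := ((1:ℤ),(1:ℤ))) ?_ ?_ ?_ ?_)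
    · show (1:ℤ) ≤ 1; norm_num
    · show (0:ℤ) ≤ 1; norm_num
    · show (1:ℤ) ≤ 1; norm_num
    · show (1:ℤ) ≤ (v:ℤ); linarith
  have hB_le : (B:ℤ) ≤ v := by
    by_contra hcon
    push_neg at hcon
    have h1 : (((0:ℤ), (v:ℤ)+1) : ℤ × ℤ) ∈ P := hcolseg _ (by positivity) (by linarith)
    have h2 : (((u:ℤ), (1:ℤ)) : ℤ × ℤ) ∈ P := by
      apply (key ((u:ℤ), (1:ℤ)) (-1)).mp
      have : (((u:ℤ) + (-1)*u, (1:ℤ) - (-1)*v) : ℤ × ℤ) = (((0:ℤ), (v:ℤ)+1)) := by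
        rw [Prod.mk.injEq]; constructor <;> ring
      rw [this]; exact h1
    have h3 : (((0:ℤ), (1:ℤ)) : ℤ × ℤ) ∈ P := hcolseg _ (by norm_num) (by linarith)
    refine h11 (rect_mem u v C hC.1 h3 h2 (c := ((1:ℤ),(1:ℤ))) ?_ ?_ ?_ ?_)
    · show (0:ℤ) ≤ 1; norm_num
    · show (1:ℤ) ≤ 1; norm_num
    · show (1:ℤ) ≤ (u:ℤ); linarith
    · show (1:ℤ) ≤ 1; norm_num
  -- connectivity forces the extents to be large
  have hABsum : (u:ℤ) + v - 1 ≤ A + B := by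
    by_contra hcon
    push_neg at hcon
    have hlt : (A:ℤ) + B ≤ u + v - 2 := by omega
    have hA0 : (0:ℤ) ≤ A := by positivity
    have hB0 : (0:ℤ) ≤ B := by positivity
    set Idx : ℤ → ℤ → ℤ → Prop := fun t x y =>
      (y = t*v ∧ -(t*(u:ℤ)) ≤ x ∧ x ≤ -(t*(u:ℤ)) + A) ∨
      (x = -(t*(u:ℤ)) ∧ t*(v:ℤ) ≤ y ∧ y ≤ t*(v:ℤ) + B) with hIdx
    have key2 : ∀ t s : ℤ, t < s →
        (t*(u:ℤ) + u ≤ s*u) ∧ (t*(v:ℤ) + v ≤ s*v) := by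
      intro t s hts
      have hd1 : 1 ≤ s - t := by linarith
      have eu : (s-t)*(u:ℤ) = s*u - t*u := by ring
      have ev : (s-t)*(v:ℤ) = s*v - t*v := by ring
      have h1u : (u:ℤ) ≤ (s-t)*u := le_mul_of_one_le_left hu'.le hd1
      have h1v : (v:ℤ) ≤ (s-t)*v := le_mul_of_one_le_left hv'.le hd1
      rw [eu] at h1u
      rw [ev] at h1v
      exact ⟨by linarith, by linarith⟩
    have uniq : ∀ t s x y, Idx t x y → Idx s x y → t = s := by
      intro t s x y h1 h2
      rcases lt_trichotomy t s with hts | hts | hts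
      · exfalso
        obtain ⟨ku, kv⟩ := key2 t s hts
        rcases h1 with ⟨e1, e2, e3⟩ | ⟨e1, e2, e3⟩ <;>
          rcases h2 with ⟨f1, f2, f3⟩ | ⟨f1, f2, f3⟩ <;> linarith
      · exact hts
      · exfalso
        obtain ⟨ku, kv⟩ := key2 s t hts
        rcases h1 with ⟨e1, e2, e3⟩ | ⟨e1, e2, e3⟩ <;>
          rcases h2 with ⟨f1, f2, f3⟩ | ⟨f1, f2, f3⟩ <;> linarith
    have noadj : ∀ (a b : ℤ × ℤ) t s, Idx t a.1 a.2 → Idx s b.1 b.2 → t < s →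
        adjZ a b → False := by
      intro a b t s h1 h2 hts hadj
      obtain ⟨ku, kv⟩ := key2 t s hts
      rcases hadj with h | h | h | h
      · have p1 : b.1 = a.1 + 1 := by rw [h]
        have p2 : b.2 = a.2 := by rw [h]
        rcases h1 with ⟨e1, e2, e3⟩ | ⟨e1, e2, e3⟩ <;>
          rcases h2 with ⟨f1, f2, f3⟩ | ⟨f1, f2, f3⟩ <;> linarith
      · have p1 : a.1 = b.1 + 1 := by rw [h]
        have p2 : a.2 = b.2 := by rw [h]
        rcases h1 with ⟨e1, e2, e3⟩ | ⟨e1, e2, e3⟩ <;>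
          rcases h2 with ⟨f1, f2, f3⟩ | ⟨f1, f2, f3⟩ <;> linarith
      · have p1 : b.1 = a.1 := by rw [h]
        have p2 : b.2 = a.2 + 1 := by rw [h]
        rcases h1 with ⟨e1, e2, e3⟩ | ⟨e1, e2, e3⟩ <;>
          rcases h2 with ⟨f1, f2, f3⟩ | ⟨f1, f2, f3⟩ <;> linarith
      · have p1 : a.1 = b.1 := by rw [h]
        have p2 : a.2 = b.2 + 1 := by rw [h]
        rcases h1 with ⟨e1, e2, e3⟩ | ⟨e1, e2, e3⟩ <;>
          rcases h2 with ⟨f1, f2, f3⟩ | ⟨f1, f2, f3⟩ <;> linarith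
    have adjsym : ∀ a b : ℤ × ℤ, adjZ a b → adjZ b a := by
      intro a b h
      rcases h with h | h | h | h
      · exact Or.inr (Or.inl h)
      · exact Or.inl h
      · exact Or.inr (Or.inr (Or.inr h))
      · exact Or.inr (Or.inr (Or.inl h))
    have hgvP : gv u v ∈ P := by
      have := hgmem 1
      have e : ((-(1*(u:ℤ)), 1*(v:ℤ)) : ℤ × ℤ) = gv u v := by
        rw [Prod.mk.injEq]
        constructor
        · show -(1*(u:ℤ)) = -(u:ℤ); ring
        · show 1*(v:ℤ) = (v:ℤ); ring
      rwa [e] at this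
    have conn := hC.2.2.1 ((0:ℤ), (0:ℤ)) (gv u v) h0 hgvP
    have hinv : ∀ b, Relation.ReflTransGen (fun p q => q ∈ P ∧ adjZ p q) ((0:ℤ),(0:ℤ)) b →
        Idx 0 b.1 b.2 ∧ b ∈ P := by
      intro b hpath
      induction hpath with
      | refl =>
        refine ⟨Or.inl ⟨by norm_num, by norm_num, by norm_num⟩, h0⟩
      | tail hab hstep ih =>
        obtain ⟨hmem, hadj⟩ := hstep
        obtain ⟨s, hs⟩ := struct2 _ hmem
        have hs' : Idx s _ _ := hs
        have hs0 : s = 0 := by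
          rcases lt_trichotomy s 0 with h | h | h
          · exact absurd (noadj _ _ s 0 hs' ih.1 h (adjsym _ _ hadj)) (fun x => x)
          · exact h
          · exact absurd (noadj _ _ 0 s ih.1 hs' h hadj) (fun x => x)
        rw [hs0] at hs'
        exact ⟨hs', hmem⟩
    have hend := (hinv _ conn).1
    have hend1 : Idx 1 (gv u v).1 (gv u v).2 := by
      refine Or.inl ⟨?_, ?_, ?_⟩
      · show (v:ℤ) = 1*v; ring
      · show -(1*(u:ℤ)) ≤ -(u:ℤ); linarith
      · show -(u:ℤ) ≤ -(1*(u:ℤ)) + A; linarith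
    exact absurd (uniq 0 1 _ _ hend hend1) (by norm_num)
  -- final set equality
  ext a
  constructor
  · intro ha
    obtain ⟨t, h⟩ := struct2 a ha
    rcases h with ⟨h1, h2, h3⟩ | ⟨h1, h2, h3⟩
    · exact ⟨t, Or.inl ⟨h1, h2, by linarith⟩⟩
    · exact ⟨t, Or.inr ⟨h1, h2, by linarith⟩⟩
  · rintro ⟨t, h⟩
    have hA0 : (0:ℤ) ≤ A := by positivity
    have hB0 : (0:ℤ) ≤ B := by positivity
    rcases h with ⟨h1, h2, h3⟩ | ⟨h1, h2, h3⟩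
    · -- row case
      by_cases hxA : a.1 + t*u ≤ A
      · apply (key a t).mp
        rw [h1]
        have e : ((a.1 + t*u, t*(v:ℤ) - t*v) : ℤ × ℤ) = ((a.1 + t*u, (0:ℤ))) := by
          rw [Prod.mk.injEq]; constructor
          · rfl
          · ring
        rw [e]
        exact hrowseg _ (by linarith) hxA
      · push_neg at hxA
        have hAu : (A:ℤ) = u - 1 := by omega
        have hBv : (B:ℤ) = v := by omega
        have hx : a.1 = -(t*(u:ℤ)) + u := by omega
        apply (key a (t-1)).mp
        have e : ((a.1 + (t-1)*u, a.2 - (t-1)*v) : ℤ × ℤ) = (((0:ℤ), (v:ℤ))) := by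
          rw [Prod.mk.injEq]; constructor
          · rw [hx]; ring
          · rw [h1]; ring
        rw [e]
        exact hcolseg _ (by positivity) (by omega)
    · -- column case
      by_cases hyB : a.2 - t*v ≤ B
      · apply (key a t).mp
        rw [h1]
        have e : ((-(t*(u:ℤ)) + t*u, a.2 - t*v) : ℤ × ℤ) = (((0:ℤ), a.2 - t*v)) := by
          rw [Prod.mk.injEq]; constructor
          · ring
          · rfl
        rw [e]
        exact hcolseg _ (by linarith) hyB
      · push_neg at hyB
        have hBv : (B:ℤ) = v - 1 := by omega
        have hAu : (A:ℤ) = u := by omega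
        have hy : a.2 = t*(v:ℤ) + v := by omega
        apply (key a (t+1)).mp
        have e : ((a.1 + (t+1)*u, a.2 - (t+1)*v) : ℤ × ℤ) = (((u:ℤ), (0:ℤ))) := by
          rw [Prod.mk.injEq]; constructor
          · rw [h1]; ring
          · rw [hy]; ring
        rw [e]
        exact hrowseg _ (by positivity) (by omega)

lemma int_window {d w : ℤ} (hw : 0 < w) (h1 : 0 ≤ d*w) (h2 : d*w ≤ w) : d = 0 ∨ d = 1 := by
  rcases lt_trichotomy d 0 with h | h | h
  · exfalso; have := mul_neg_of_neg_of_pos h hw; linarith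
  · exact Or.inl h
  · right
    by_contra hne
    have hd2 : 2 ≤ d := by omega
    have : (2:ℤ)*w ≤ d*w := mul_le_mul_of_nonneg_right hd2 hw.le
    linarith

lemma mem_P0_row (u v : ℕ) (t x : ℤ) (h1 : 0 ≤ x) (h2 : x ≤ u) :
    ((-(t*(u:ℤ)) + x, t*(v:ℤ)) : ℤ × ℤ) ∈ P0 u v :=
  ⟨t, Or.inl ⟨rfl, by show -(t*(u:ℤ)) ≤ -(t*(u:ℤ)) + x; linarith,
    by show -(t*(u:ℤ)) + x ≤ -(t*(u:ℤ)) + u; linarith⟩⟩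

lemma mem_P0_col (u v : ℕ) (t y : ℤ) (h1 : 0 ≤ y) (h2 : y ≤ v) :
    ((-(t*(u:ℤ)), t*(v:ℤ) + y) : ℤ × ℤ) ∈ P0 u v :=
  ⟨t, Or.inr ⟨rfl, by show t*(v:ℤ) ≤ t*(v:ℤ) + y; linarith,
    by show t*(v:ℤ) + y ≤ t*(v:ℤ) + v; linarith⟩⟩

lemma pt_shift (u v : ℕ) (x y t : ℤ) :
    ((x, y) : ℤ × ℤ) + t • gv u v = ((x - t*u, y + t*v) : ℤ × ℤ) := by
  rw [smul_gv_eq]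
  show ((x + -(t*(u:ℤ)), y + t*(v:ℤ)) : ℤ × ℤ) = _
  rw [Prod.mk.injEq]
  refine ⟨by ring, rfl⟩

/-- horizontally adjacent pairs in `P0` are arm pairs -/
lemma horiz (u v : ℕ) (hu : 0 < u) (hv : 0 < v) {a : ℤ × ℤ}
    (ha : a ∈ P0 u v) (hb : ((a.1 + 1, a.2) : ℤ × ℤ) ∈ P0 u v) :
    ∃ t x' : ℤ, 0 ≤ x' ∧ x' + 1 ≤ u ∧ a = ((x', 0) : ℤ × ℤ) + t • gv u v := by
  have hu' : (0:ℤ) < u := by exact_mod_cast hu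
  have hv' : (0:ℤ) < v := by exact_mod_cast hv
  obtain ⟨t, ht⟩ := ha
  obtain ⟨s, hs⟩ := hb
  have sol : ∀ t x' : ℤ, 0 ≤ x' → x' + 1 ≤ u → a.1 = -(t*(u:ℤ)) + x' → a.2 = t*(v:ℤ) →
      ∃ t x' : ℤ, 0 ≤ x' ∧ x' + 1 ≤ u ∧ a = ((x', 0) : ℤ × ℤ) + t • gv u v := by
    intro t x' h1 h2 h3 h4
    refine ⟨t, x', h1, h2, ?_⟩
    rw [pt_shift, Prod.ext_iff]
    constructor
    · show a.1 = x' - t*u; linarith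
    · show a.2 = 0 + t*v; linarith
  rcases ht with ⟨e1, e2, e3⟩ | ⟨e1, e2, e3⟩ <;> rcases hs with ⟨f1, f2, f3⟩ | ⟨f1, f2, f3⟩
  · -- a row t, b row s
    dsimp only at f1 f2 f3
    have hts : t = s := by
      have : t * (v:ℤ) = s * v := by linarith
      exact mul_right_cancel₀ (by linarith) this
    rw [← hts] at f3
    exact sol t (a.1 + t*u) (by linarith) (by linarith) (by ring) e1
  · -- a row t, b col s
    dsimp only at f1 f2 f3
    have hwin : t - s = 0 ∨ t - s = 1 := by
      apply int_window hv'
      · have : (t - s) * (v:ℤ) = t*v - s*v := by ring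
        rw [this]; linarith
      · have : (t - s) * (v:ℤ) = t*v - s*v := by ring
        rw [this]; linarith
    rcases hwin with h | h
    · exfalso
      have : t = s := by linarith
      rw [this] at e2
      linarith
    · -- t = s + 1 : a is the last arm cell
      have hx : a.1 = -(t*(u:ℤ)) + (u - 1) := by
        have : s * (u:ℤ) = t*u - u := by
          have : (t - s) * (u:ℤ) = u := by rw [h]; ring
          linarith [this]
        linarith
      exact sol t (u - 1) (by linarith) (by linarith) hx e1
  · -- a col t, b row s
    dsimp only at f1 f2 f3
    have hwin : s - t = 0 ∨ s - t = 1 := by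
      apply int_window hv'
      · have : (s - t) * (v:ℤ) = s*v - t*v := by ring
        rw [this]; linarith
      · have : (s - t) * (v:ℤ) = s*v - t*v := by ring
        rw [this]; linarith
    rcases hwin with h | h
    · have hts : s = t := by linarith
      rw [hts] at f1 f2 f3
      exact sol t 0 (by linarith) (by linarith) (by rw [e1]; ring) (by linarith)
    · exfalso
      have hsu : s * (u:ℤ) = t*u + u := by
        have : (s - t) * (u:ℤ) = u := by rw [h]; ring
        linarith [this]
      rw [e1] at f3
      linarith
  · -- a col t, b col s
    dsimp only at f1 f2 f3
    have hst : (t - s) * (u:ℤ) = 1 := by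
      have h0 : -(s*(u:ℤ)) = -(t*u) + 1 := by rw [← f1, e1]
      have ee : (t - s) * (u:ℤ) = t*u - s*u := by ring
      rw [ee]; linarith
    have ht1 : t - s = 1 ∧ (u:ℤ) = 1 := by
      constructor
      · rcases int_window hu' (by rw [hst]; linarith) (by rw [hst]; linarith) with h | h
        · exfalso; rw [h] at hst; simp at hst
        · exact h
      · rcases int_window hu' (by rw [hst]; linarith) (by rw [hst]; linarith) with h | h
        · exfalso; rw [h] at hst; simp at hst
        · rw [h] at hst; linarith
    obtain ⟨hd, hu1⟩ := ht1
    -- a.2 must be t*v (the corner) : a.2 ∈ [t*v, t*v+v] ∩ [s*v, s*v+v] with s = t-1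
    have hsv : s * (v:ℤ) = t*v - v := by
      have : (t - s) * (v:ℤ) = v := by rw [hd]; ring
      linarith [this]
    have ha2 : a.2 = t*(v:ℤ)  := by linarith
    exact sol t 0 (by linarith) (by linarith) (by rw [e1]; ring) ha2

/-- vertically adjacent pairs in `P0` are leg pairs -/
lemma vert (u v : ℕ) (hu : 0 < u) (hv : 0 < v) {a : ℤ × ℤ}
    (ha : a ∈ P0 u v) (hb : ((a.1, a.2 + 1) : ℤ × ℤ) ∈ P0 u v) :
    ∃ t y' : ℤ, 0 ≤ y' ∧ y' + 1 ≤ v ∧ a = ((0, y') : ℤ × ℤ) + t • gv u v := by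
  have hu' : (0:ℤ) < u := by exact_mod_cast hu
  have hv' : (0:ℤ) < v := by exact_mod_cast hv
  obtain ⟨t, ht⟩ := ha
  obtain ⟨s, hs⟩ := hb
  have sol : ∀ t y' : ℤ, 0 ≤ y' → y' + 1 ≤ v → a.1 = -(t*(u:ℤ)) → a.2 = t*(v:ℤ) + y' →
      ∃ t y' : ℤ, 0 ≤ y' ∧ y' + 1 ≤ v ∧ a = ((0, y') : ℤ × ℤ) + t • gv u v := by
    intro t y' h1 h2 h3 h4
    refine ⟨t, y', h1, h2, ?_⟩
    rw [pt_shift, Prod.ext_iff]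
    constructor
    · show a.1 = 0 - t*u; linarith
    · show a.2 = y' + t*v; linarith
  rcases ht with ⟨e1, e2, e3⟩ | ⟨e1, e2, e3⟩ <;> rcases hs with ⟨f1, f2, f3⟩ | ⟨f1, f2, f3⟩
  · -- a row t, b row s
    dsimp only at f1 f2 f3
    have hwin : s - t = 0 ∨ s - t = 1 := by
      apply int_window hv'
      · have ee : (s - t) * (v:ℤ) = s*v - t*v := by ring
        rw [ee]; linarith
      · have ee : (s - t) * (v:ℤ) = s*v - t*v := by ring
        rw [ee]; linarith
    rcases hwin with h | h
    · exfalso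
      have : s = t := by linarith
      rw [this] at f1
      linarith
    · -- s = t+1 : a is the corner, b presents as the glued top cell
      have hsu : s * (u:ℤ) = t*u + u := by
        have ee : (s - t) * (u:ℤ) = u := by rw [h]; ring
        linarith [ee]
      have ha1 : a.1 = -(t*(u:ℤ)) := by linarith
      exact sol t 0 (by linarith) (by linarith) ha1 (by linarith)
  · -- a row t, b col s
    dsimp only at f1 f2 f3
    have hwin : t - s = 0 ∨ t - s = 1 := by
      apply int_window hu'
      · have ee : (t - s) * (u:ℤ) = t*u - s*u := by ring
        rw [ee]; linarith
      · have ee : (t - s) * (u:ℤ) = t*u - s*u := by ring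
        rw [ee]; linarith
    rcases hwin with h | h
    · have hts : t = s := by linarith
      rw [← hts] at f1
      exact sol t 0 (by linarith) (by linarith) f1 (by linarith)
    · exfalso
      have hsv : s * (v:ℤ) = t*v - v := by
        have ee : (t - s) * (v:ℤ) = v := by rw [h]; ring
        linarith [ee]
      linarith
  · -- a col t, b row s
    dsimp only at f1 f2 f3
    have hwin : s - t = 0 ∨ s - t = 1 := by
      apply int_window hu'
      · have ee : (s - t) * (u:ℤ) = s*u - t*u := by ring
        rw [ee]; linarith
      · have ee : (s - t) * (u:ℤ) = s*u - t*u := by ring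
        rw [ee]; linarith
    rcases hwin with h | h
    · exfalso
      have : s = t := by linarith
      rw [this] at f1
      linarith
    · have hsv : s * (v:ℤ) = t*v + v := by
        have ee : (s - t) * (v:ℤ) = v := by rw [h]; ring
        linarith [ee]
      exact sol t (v - 1) (by linarith) (by linarith) e1 (by linarith)
  · -- a col t, b col s
    dsimp only at f1 f2 f3
    have hts : t = s := by
      have : t * (u:ℤ) = s * u := by linarith
      exact mul_right_cancel₀ (by linarith) this
    rw [← hts] at f3
    exact sol t (a.2 - t*v) (by linarith) (by linarith) e1 (by ring)


lemma mem_P0_row0 (u v : ℕ) (x : ℤ) (h1 : 0 ≤ x) (h2 : x ≤ u) :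
    ((x, (0:ℤ)) : ℤ × ℤ) ∈ P0 u v :=
  ⟨0, Or.inl ⟨by show (0:ℤ) = 0*v; ring, by show -(0*(u:ℤ)) ≤ x; linarith,
    by show x ≤ -(0*(u:ℤ)) + u; linarith⟩⟩

lemma mem_P0_col0 (u v : ℕ) (y : ℤ) (h1 : 0 ≤ y) (h2 : y ≤ v) :
    (((0:ℤ), y) : ℤ × ℤ) ∈ P0 u v :=
  ⟨0, Or.inr ⟨by show (0:ℤ) = -(0*(u:ℤ)); ring, by show 0*(v:ℤ) ≤ y; linarith,
    by show y ≤ 0*(v:ℤ) + v; linarith⟩⟩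

lemma glue (u v : ℕ) : cmk u v (((u:ℤ), 0)) = cmk u v ((0, (v:ℤ))) := by
  rw [cmk_eq_iff]
  refine ⟨1, ?_⟩
  rw [pt_shift, Prod.mk.injEq]
  constructor <;> ring

lemma cylOk_iff (u v : ℕ) (hu : 0 < u) (hv : 0 < v) (C : Set (Cyl u v))
    (hpre : preimg u v C = P0 u v) (T : Cyl u v → ℕ) :
    CylOk u v C T ↔
      ((∀ x : ℕ, x + 1 ≤ u → T (cmk u v ((x:ℤ), 0)) ≤ T (cmk u v ((x:ℤ)+1, 0))) ∧
       (∀ y : ℕ, y + 1 ≤ v → T (cmk u v (0, (y:ℤ))) < T (cmk u v (0, (y:ℤ)+1)))) := by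
  have hmem : ∀ a : ℤ × ℤ, (cmk u v a ∈ C ↔ a ∈ P0 u v) := by
    intro a
    rw [← hpre]
    exact Iff.rfl
  constructor
  · rintro ⟨hr, hc⟩
    constructor
    · intro x hx
      apply hr
      · exact (hmem _).mpr (mem_P0_row0 u v _ (by positivity) (by exact_mod_cast Nat.le_of_succ_le hx))
      · exact (hmem _).mpr (mem_P0_row0 u v _ (by positivity) (by exact_mod_cast hx))
      · exact ⟨((x:ℤ), 0), rfl, rfl⟩
    · intro y hy
      apply hc
      · exact (hmem _).mpr (mem_P0_col0 u v _ (by positivity) (by exact_mod_cast Nat.le_of_succ_le hy))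
      · exact (hmem _).mpr (mem_P0_col0 u v _ (by positivity) (by exact_mod_cast hy))
      · exact ⟨(0, (y:ℤ)), rfl, rfl⟩
  · rintro ⟨harm, hleg⟩
    constructor
    · rintro X Y hX hY ⟨a, rfl, rfl⟩
      have ha : a ∈ P0 u v := (hmem _).mp hX
      have hb : ((a.1 + 1, a.2) : ℤ × ℤ) ∈ P0 u v := (hmem _).mp hY
      obtain ⟨t, x', h1, h2, heq⟩ := horiz u v hu hv ha hb
      have e1 : cmk u v a = cmk u v ((x', 0)) := by rw [heq, cmk_shift]
      have e2 : cmk u v ((a.1 + 1, a.2)) = cmk u v ((x' + 1, 0)) := by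
        have e3 : ((a.1 + 1, a.2) : ℤ × ℤ) = ((x' + 1, 0) : ℤ × ℤ) + t • gv u v := by
          rw [heq, pt_shift, pt_shift]
          show ((x' - t*u + 1, 0 + t*v) : ℤ × ℤ) = _
          rw [Prod.mk.injEq]
          constructor <;> ring
        rw [e3, cmk_shift]
      rw [e1, e2]
      have hc : ((x'.toNat : ℤ)) = x' := Int.toNat_of_nonneg h1
      have := harm x'.toNat (by omega)
      rwa [hc] at this
    · rintro X Y hX hY ⟨a, rfl, rfl⟩
      have ha : a ∈ P0 u v := (hmem _).mp hX
      have hb : ((a.1, a.2 + 1) : ℤ × ℤ) ∈ P0 u v := (hmem _).mp hY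
      obtain ⟨t, y', h1, h2, heq⟩ := vert u v hu hv ha hb
      have e1 : cmk u v a = cmk u v ((0, y')) := by rw [heq, cmk_shift]
      have e2 : cmk u v ((a.1, a.2 + 1)) = cmk u v ((0, y' + 1)) := by
        have e3 : ((a.1, a.2 + 1) : ℤ × ℤ) = ((0, y' + 1) : ℤ × ℤ) + t • gv u v := by
          rw [heq, pt_shift, pt_shift]
          show ((0 - t*u, y' + t*v + 1) : ℤ × ℤ) = _
          rw [Prod.mk.injEq]
          constructor <;> ring
        rw [e3, cmk_shift]
      rw [e1, e2]
      have hc : ((y'.toNat : ℤ)) = y' := Int.toNat_of_nonneg h1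
      have := hleg y'.toNat (by omega)
      rwa [hc] at this

/-- class separation lemmas -/
lemma sep_rr (u v : ℕ) (hu : 0 < u) (hv : 0 < v) (x x' : ℤ)
    (h1 : 0 ≤ x) (h2 : x < u) (h1' : 0 ≤ x') (h2' : x' < u)
    (h : cmk u v ((x, 0)) = cmk u v ((x', 0))) : x = x' := by
  obtain ⟨t, ht⟩ := (cmk_eq_iff u v _ _).mp h
  rw [pt_shift, Prod.mk.injEq] at ht
  obtain ⟨g1, g2⟩ := ht
  have hv' : (0:ℤ) < v := by exact_mod_cast hv
  have ht0 : t = 0 := by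
    rcases mul_eq_zero.mp (show t * (v:ℤ) = 0 by linarith) with h | h
    · exact h
    · exfalso; linarith
  rw [ht0] at g1
  linarith

lemma sep_rc (u v : ℕ) (hu : 0 < u) (hv : 0 < v) (x y : ℤ)
    (h1 : 0 ≤ x) (h2 : x < u) (h1' : 1 ≤ y) (h2' : y ≤ v)
    (h : cmk u v ((x, 0)) = cmk u v ((0, y))) : False := by
  obtain ⟨t, ht⟩ := (cmk_eq_iff u v _ _).mp h
  rw [pt_shift, Prod.mk.injEq] at ht
  obtain ⟨g1, g2⟩ := ht
  have hv' : (0:ℤ) < v := by exact_mod_cast hv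
  have hu' : (0:ℤ) < u := by exact_mod_cast hu
  -- g1 : 0 = x - t*u, g2 : y = 0 + t*v
  have ht1 : 1 ≤ t := by
    by_contra hcon
    push_neg at hcon
    have : t ≤ 0 := by omega
    have : t * (v:ℤ) ≤ 0 := mul_nonpos_of_nonpos_of_nonneg this hv'.le
    linarith
  have : (u:ℤ) ≤ t * u := le_mul_of_one_le_left hu'.le ht1
  linarith

lemma sep_cc (u v : ℕ) (hu : 0 < u) (hv : 0 < v) (y y' : ℤ)
    (h : cmk u v ((0, y)) = cmk u v ((0, y'))) : y = y' := by
  obtain ⟨t, ht⟩ := (cmk_eq_iff u v _ _).mp h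
  rw [pt_shift, Prod.mk.injEq] at ht
  obtain ⟨g1, g2⟩ := ht
  have hu' : (0:ℤ) < u := by exact_mod_cast hu
  have ht0 : t = 0 := by
    rcases mul_eq_zero.mp (show t * (u:ℤ) = 0 by linarith) with h | h
    · exact h
    · exfalso; linarith
  rw [ht0] at g2
  linarith

def Sh (a b : ℕ) : Set (ℕ × ℕ) := cells (hookFun a b)

lemma mem_Sh (a b : ℕ) (p : ℕ × ℕ) :
    p ∈ Sh a b ↔ (p.1 = 0 ∧ p.2 < a) ∨ (1 ≤ p.1 ∧ p.1 ≤ b ∧ p.2 = 0) := by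
  obtain ⟨r, c⟩ := p
  show c < hookFun a b r ↔ _
  unfold hookFun
  dsimp only
  split_ifs with h1 h2 <;> omega

lemma Sh_finite (a b : ℕ) : (Sh a b).Finite := by
  apply Set.Finite.subset (Set.finite_Icc ((0,0) : ℕ × ℕ) ((b, a)))
  intro p hp
  rw [mem_Sh] at hp
  constructor
  · exact ⟨Nat.zero_le _, Nat.zero_le _⟩
  · constructor
    · show p.1 ≤ b; omega
    · show p.2 ≤ a; omega

def hookOkF (a b : ℕ) (T : ℕ × ℕ → ℕ) : Prop :=
  RowColOk (Sh a b) T ∧ T (0, a-1) ≤ T (b, 0)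

lemma rcOk_hook (a b : ℕ) (ha : 1 ≤ a) (T : ℕ × ℕ → ℕ) :
    RowColOk (Sh a b) T ↔
      (∀ c : ℕ, c + 2 ≤ a → T (0, c) ≤ T (0, c+1)) ∧
      (∀ r : ℕ, r + 1 ≤ b → T (r, 0) < T (r+1, 0)) := by
  constructor
  · rintro ⟨h1, h2⟩
    constructor
    · intro c hc
      exact h1 0 c ((mem_Sh a b _).mpr (by dsimp; omega)) ((mem_Sh a b _).mpr (by dsimp; omega))
    · intro r hr
      by_cases hr0 : r = 0
      · subst hr0
        refine h2 0 0 ((mem_Sh a b _).mpr (by dsimp; omega)) ((mem_Sh a b _).mpr (by dsimp; omega))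
      · refine h2 r 0 ((mem_Sh a b _).mpr (by dsimp; omega)) ((mem_Sh a b _).mpr (by dsimp; omega))
  · rintro ⟨h1, h2⟩
    constructor
    · intro r c hm1 hm2
      rw [mem_Sh] at hm1 hm2
      dsimp at hm1 hm2
      have hrc : r = 0 ∧ c + 2 ≤ a := by omega
      obtain ⟨rfl, hc⟩ := hrc
      exact h1 c hc
    · intro r c hm1 hm2
      rw [mem_Sh] at hm1 hm2
      dsimp at hm1 hm2
      have hrc : c = 0 ∧ r + 1 ≤ b := by omega
      obtain ⟨rfl, hr⟩ := hrc
      exact h2 r hr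


def phicyl (u v : ℕ) (p : ℕ × ℕ) : Cyl u v :=
  if p.1 = 0 then cmk u v (((p.2 : ℤ)), 0) else cmk u v (0, ((p.1 : ℤ)))

lemma phicyl_arm (u v : ℕ) (c : ℕ) : phicyl u v (0, c) = cmk u v ((c:ℤ), 0) := if_pos rfl

lemma phicyl_leg (u v : ℕ) (r : ℕ) (hr : r ≠ 0) : phicyl u v (r, 0) = cmk u v (0, (r:ℤ)) :=
  if_neg hr

lemma cylSchur_eq_hook (u v : ℕ) (hu : 0 < u) (hv : 0 < v) (C : Set (Cyl u v))
    (hpre : preimg u v C = P0 u v) :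
    cylSchur u v C = tabSeries (Sh u v) (hookOkF u v) := by
  have hmem : ∀ a : ℤ × ℤ, (cmk u v a ∈ C ↔ a ∈ P0 u v) := by
    intro a; rw [← hpre]; exact Iff.rfl
  have hu' : (0:ℤ) < u := by exact_mod_cast hu
  have hv' : (0:ℤ) < v := by exact_mod_cast hv
  have hfm : ∀ p : ↥(Sh u v), phicyl u v p.1 ∈ C := by
    rintro ⟨⟨r, c⟩, hp⟩
    rcases (mem_Sh u v _).mp hp with ⟨hr, hc⟩ | ⟨hr1, hr2, hc⟩
    · dsimp only at hr hc
      subst hr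
      rw [phicyl_arm]
      exact (hmem _).mpr (mem_P0_row0 u v _ (by positivity) (by exact_mod_cast Nat.le_of_lt hc))
    · dsimp only at hr1 hr2 hc
      subst hc
      rw [phicyl_leg u v r (by omega)]
      exact (hmem _).mpr (mem_P0_col0 u v _ (by positivity) (by exact_mod_cast hr2))
  have hinj : Function.Injective (fun p : ↥(Sh u v) => (⟨phicyl u v p.1, hfm p⟩ : ↥C)) := by
    rintro ⟨⟨r, c⟩, hp⟩ ⟨⟨r', c'⟩, hp'⟩ hpq
    simp only [Subtype.mk.injEq] at hpq
    apply Subtype.ext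
    show ((r, c) : ℕ × ℕ) = (r', c')
    rcases (mem_Sh u v _).mp hp with ⟨hr, hc⟩ | ⟨hr1, hr2, hc⟩ <;>
      rcases (mem_Sh u v _).mp hp' with ⟨hr', hc'⟩ | ⟨hr1', hr2', hc'⟩ <;>
      dsimp only at *
    · subst hr; subst hr'
      rw [phicyl_arm, phicyl_arm] at hpq
      have := sep_rr u v hu hv _ _ (by positivity) (by exact_mod_cast hc)
        (by positivity) (by exact_mod_cast hc') hpq
      have : c = c' := by exact_mod_cast this
      rw [this]
    · exfalso
      subst hr; subst hc'
      rw [phicyl_arm, phicyl_leg u v r' (by omega)] at hpq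
      exact sep_rc u v hu hv _ _ (by positivity) (by exact_mod_cast hc)
        (by exact_mod_cast hr1') (by exact_mod_cast hr2') hpq
    · exfalso
      subst hr'; subst hc
      rw [phicyl_arm, phicyl_leg u v r (by omega)] at hpq
      exact sep_rc u v hu hv _ _ (by positivity) (by exact_mod_cast hc')
        (by exact_mod_cast hr1) (by exact_mod_cast hr2) hpq.symm
    · subst hc; subst hc'
      rw [phicyl_leg u v r (by omega), phicyl_leg u v r' (by omega)] at hpq
      have := sep_cc u v hu hv _ _ hpq
      have : r = r' := by exact_mod_cast this
      rw [this]
  have hsurj : Function.Surjective (fun p : ↥(Sh u v) => (⟨phicyl u v p.1, hfm p⟩ : ↥C)) := by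
    rintro ⟨z, hz⟩
    obtain ⟨a, rfl⟩ := cmk_surj u v z
    have ha := (hmem a).mp hz
    obtain ⟨t, ht⟩ := ha
    rcases ht with ⟨e1, e2, e3⟩ | ⟨e1, e2, e3⟩
    · -- row form
      have heq : a = (((a.1 + t*u), 0) : ℤ × ℤ) + t • gv u v := by
        rw [pt_shift, Prod.ext_iff]
        constructor
        · show a.1 = a.1 + t*u - t*u; ring
        · show a.2 = 0 + t*v; linarith
      have e : cmk u v a = cmk u v ((a.1 + t*u, 0)) := by
        conv_lhs => rw [heq]
        rw [cmk_shift]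
      by_cases hcase : a.1 + t*u < u
      · refine ⟨⟨(0, (a.1 + t*u).toNat), ?_⟩, ?_⟩
        · rw [mem_Sh]; left; exact ⟨rfl, by omega⟩
        · apply Subtype.ext
          show phicyl u v (0, (a.1 + t*u).toNat) = cmk u v a
          rw [phicyl_arm, e]
          congr 2
          omega
      · refine ⟨⟨(v, 0), ?_⟩, ?_⟩
        · rw [mem_Sh]; right; exact ⟨hv, le_refl v, rfl⟩
        · apply Subtype.ext
          show phicyl u v (v, 0) = cmk u v a
          rw [phicyl_leg u v v (by omega), e, ← glue]
          congr 2
          omega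
    · -- column form
      have heq : a = ((0, (a.2 - t*v)) : ℤ × ℤ) + t • gv u v := by
        rw [pt_shift, Prod.ext_iff]
        constructor
        · show a.1 = 0 - t*u; linarith
        · show a.2 = a.2 - t*v + t*v; ring
      have e : cmk u v a = cmk u v ((0, a.2 - t*v)) := by
        conv_lhs => rw [heq]
        rw [cmk_shift]
      by_cases hcase : 1 ≤ a.2 - t*v
      · refine ⟨⟨((a.2 - t*v).toNat, 0), ?_⟩, ?_⟩
        · rw [mem_Sh]; right; exact ⟨by omega, by omega, rfl⟩
        · apply Subtype.ext
          show phicyl u v ((a.2 - t*v).toNat, 0) = cmk u v a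
          rw [phicyl_leg u v _ (by omega), e]
          congr 2
          omega
      · refine ⟨⟨(0, 0), ?_⟩, ?_⟩
        · rw [mem_Sh]; left; exact ⟨rfl, hu⟩
        · apply Subtype.ext
          show phicyl u v (0, 0) = cmk u v a
          rw [phicyl_arm, e]
          congr 2
          omega
  set σ := Equiv.ofBijective _ ⟨hinj, hsurj⟩ with hσ
  show tabSeries C (CylOk u v C) = _
  refine (tabSeries_transport (Sh u v) C (hookOkF u v) (CylOk u v C) σ ?_).symm
  intro T hsupp
  set T' := pushT (Sh u v) C σ T with hT'
  have EV : ∀ (p : ℕ × ℕ) (hp : p ∈ Sh u v), T' (phicyl u v p) = T p := by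
    intro p hp
    exact pushT_at (Sh u v) C σ T ⟨p, hp⟩
  have EV1 : ∀ x : ℕ, x < u → T' (cmk u v ((x:ℤ), 0)) = T (0, x) := by
    intro x hx
    rw [← phicyl_arm]
    exact EV (0, x) ((mem_Sh u v _).mpr (Or.inl ⟨rfl, hx⟩))
  have EV3 : ∀ y : ℕ, 1 ≤ y → y ≤ v → T' (cmk u v (0, (y:ℤ))) = T (y, 0) := by
    intro y h1 h2
    rw [← phicyl_leg u v y (by omega)]
    exact EV (y, 0) ((mem_Sh u v _).mpr (Or.inr ⟨h1, h2, rfl⟩))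
  rw [cylOk_iff u v hu hv C hpre T']
  unfold hookOkF
  rw [rcOk_hook u v hu T]
  constructor
  · rintro ⟨⟨harm, hleg⟩, hwrap⟩
    constructor
    · intro x hx
      rw [EV1 x (by omega)]
      by_cases hxe : x + 1 < u
      · have e : ((x:ℤ)+1) = (((x+1:ℕ)):ℤ) := by push_cast; ring
        rw [e, EV1 (x+1) hxe]
        exact harm x (by omega)
      · have hxu : x = u - 1 := by omega
        have e : cmk u v ((x:ℤ)+1, 0) = cmk u v (0, (v:ℤ)) := by
          rw [show ((x:ℤ)+1) = ((u:ℕ):ℤ) by omega]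
          exact glue u v
        rw [e, EV3 v hv (le_refl v), hxu]
        exact hwrap
    · intro y hy
      have e : ((y:ℤ)+1) = (((y+1:ℕ)):ℤ) := by push_cast; ring
      rw [e, EV3 (y+1) (by omega) (by omega)]
      by_cases hy0 : y = 0
      · subst hy0
        have e0 : ((0:ℕ):ℤ) = (0:ℤ) := rfl
        have : T' (cmk u v (0, ((0:ℕ):ℤ))) = T (0, 0) := EV1 0 hu
        rw [this]
        exact hleg 0 hy
      · rw [EV3 y (by omega) (by omega)]
        exact hleg y hy
  · rintro ⟨harmC, hlegC⟩
    refine ⟨⟨?_, ?_⟩, ?_⟩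
    · intro c hc
      have := harmC c (by omega)
      rw [EV1 c (by omega)] at this
      have e : ((c:ℤ)+1) = (((c+1:ℕ)):ℤ) := by push_cast; ring
      rw [e, EV1 (c+1) (by omega)] at this
      exact this
    · intro r hr
      have := hlegC r hr
      have e : ((r:ℤ)+1) = (((r+1:ℕ)):ℤ) := by push_cast; ring
      rw [e, EV3 (r+1) (by omega) (by omega)] at this
      by_cases hr0 : r = 0
      · subst hr0
        rwa [show T' (cmk u v (0, ((0:ℕ):ℤ))) = T (0, 0) from EV1 0 hu] at this
      · rw [EV3 r (by omega) (by omega)] at this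
        exact this
    · have := harmC (u-1) (by omega)
      rw [EV1 (u-1) (by omega)] at this
      have e : cmk u v (((u-1:ℕ):ℤ)+1, 0) = cmk u v (0, (v:ℤ)) := by
        rw [show (((u-1:ℕ):ℤ)+1) = ((u:ℕ):ℤ) by omega]
        exact glue u v
      rw [e, EV3 v hv (le_refl v)] at this
      exact this


lemma schur_hook_tab (a b : ℕ) : schur (hookFun a b) = tabSeries (Sh a b) (RowColOk (Sh a b)) := by
  unfold schur skewSchur
  have h : cells (fun _ => 0) = (∅ : Set (ℕ × ℕ)) := by
    ext p; simp [cells]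
  rw [h, Set.diff_empty]
  rfl

def GOk (a b : ℕ) (T : ℕ × ℕ → ℕ) : Prop :=
  RowColOk (Sh a b) T ∧ T (b, 0) < T (0, a-1)

lemma hook_split (a b : ℕ) :
    tabSeries (Sh a b) (RowColOk (Sh a b)) =
      tabSeries (Sh a b) (hookOkF a b) + tabSeries (Sh a b) (GOk a b) := by
  apply tabSeries_split _ (Sh_finite a b)
  · intro T _
    constructor
    · intro h
      rcases le_or_gt (T (0, a-1)) (T (b, 0)) with hle | hlt
      · exact Or.inl ⟨h, hle⟩
      · exact Or.inr ⟨h, hlt⟩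
    · rintro (⟨h, _⟩ | ⟨h, _⟩) <;> exact h
  · rintro T ⟨⟨_, h1⟩, ⟨_, h2⟩⟩
    omega

/-- the moving bijection on cells: `(0, a+1) ↦ (b+1, 0)` -/
def moveEquiv (a b : ℕ) : ↥(Sh (a+2) b) ≃ ↥(Sh (a+1) (b+1)) where
  toFun p := if h : (p : ℕ × ℕ) = (0, a+1) then
      ⟨(b+1, 0), by rw [mem_Sh]; right; exact ⟨by omega, le_refl _, rfl⟩⟩
    else
      ⟨p, by
        have hp := p.2
        rw [mem_Sh] at hp ⊢
        rw [Prod.ext_iff] at h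
        dsimp only at h ⊢
        omega⟩
  invFun q := if h : (q : ℕ × ℕ) = (b+1, 0) then
      ⟨(0, a+1), by rw [mem_Sh]; left; exact ⟨rfl, by omega⟩⟩
    else
      ⟨q, by
        have hq := q.2
        rw [mem_Sh] at hq ⊢
        rw [Prod.ext_iff] at h
        dsimp only at h ⊢
        omega⟩
  left_inv p := by
    dsimp only
    by_cases h : (p : ℕ × ℕ) = (0, a+1)
    · rw [dif_pos h]
      rw [dif_pos rfl]
      exact Subtype.ext h.symm
    · rw [dif_neg h]
      have hne : (p : ℕ × ℕ) ≠ (b+1, 0) := by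
        have hp := p.2
        rw [mem_Sh] at hp
        intro hcon
        rw [Prod.ext_iff] at hcon
        dsimp only at hcon
        omega
      rw [dif_neg hne]
  right_inv q := by
    dsimp only
    by_cases h : (q : ℕ × ℕ) = (b+1, 0)
    · rw [dif_pos h]
      rw [dif_pos rfl]
      exact Subtype.ext h.symm
    · rw [dif_neg h]
      have hne : (q : ℕ × ℕ) ≠ (0, a+1) := by
        have hq := q.2
        rw [mem_Sh] at hq
        intro hcon
        rw [Prod.ext_iff] at hcon
        dsimp only at hcon
        omega
      rw [dif_neg hne]

lemma hook_move (a b : ℕ) :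
    tabSeries (Sh (a+2) b) (GOk (a+2) b) =
      tabSeries (Sh (a+1) (b+1)) (hookOkF (a+1) (b+1)) := by
  apply tabSeries_transport _ _ _ _ (moveEquiv a b)
  intro T hsupp
  set T' := pushT (Sh (a+2) b) (Sh (a+1) (b+1)) (moveEquiv a b) T with hT'
  have hbm : ((b+1, 0) : ℕ × ℕ) ∈ Sh (a+1) (b+1) := by
    rw [mem_Sh]; right; exact ⟨by omega, le_refl _, rfl⟩
  have ev_move : T' (b+1, 0) = T (0, a+1) := by
    rw [hT']
    show (if h : ((b+1, 0) : ℕ × ℕ) ∈ Sh (a+1) (b+1) then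
        T ((moveEquiv a b).symm ⟨(b+1, 0), h⟩) else 0) = _
    rw [dif_pos hbm]
    congr 1
    show ((moveEquiv a b).symm ⟨(b+1, 0), hbm⟩ : ℕ × ℕ) = (0, a+1)
    unfold moveEquiv
    rw [Equiv.coe_fn_symm_mk]
    rw [dif_pos rfl]
  have ev_id : ∀ q : ℕ × ℕ, q ∈ Sh (a+1) (b+1) → q ≠ (b+1, 0) → T' q = T q := by
    intro q hq hne
    rw [hT']
    show (if h : q ∈ Sh (a+1) (b+1) then T ((moveEquiv a b).symm ⟨q, h⟩) else 0) = _
    rw [dif_pos hq]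
    congr 1
    show ((moveEquiv a b).symm ⟨q, hq⟩ : ℕ × ℕ) = q
    unfold moveEquiv
    rw [Equiv.coe_fn_symm_mk]
    rw [dif_neg hne]
  unfold GOk hookOkF
  rw [rcOk_hook _ _ (by omega), rcOk_hook _ _ (by omega)]
  have e_arm : ∀ c : ℕ, c ≤ a → T' (0, c) = T (0, c) := by
    intro c hc
    exact ev_id (0, c) (by rw [mem_Sh]; left; exact ⟨rfl, by omega⟩)
      (by intro hcon; rw [Prod.ext_iff] at hcon; dsimp only at hcon; omega)
  have e_leg : ∀ r : ℕ, r ≤ b → T' (r, 0) = T (r, 0) := by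
    intro r hr
    by_cases hr0 : r = 0
    · subst hr0
      exact ev_id (0, 0) (by rw [mem_Sh]; left; exact ⟨rfl, by omega⟩)
        (by intro hcon; rw [Prod.ext_iff] at hcon; dsimp only at hcon; omega)
    · exact ev_id (r, 0) (by rw [mem_Sh]; right; exact ⟨by omega, by omega, rfl⟩)
        (by intro hcon; rw [Prod.ext_iff] at hcon; dsimp only at hcon; omega)
  constructor
  · rintro ⟨⟨harm, hleg⟩, hstrict⟩
    refine ⟨⟨?_, ?_⟩, ?_⟩
    · intro c hc
      rw [e_arm c (by omega), e_arm (c+1) (by omega)]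
      exact harm c (by omega)
    · intro r hr
      by_cases hrb : r + 1 ≤ b
      · rw [e_leg r (by omega), e_leg (r+1) (by omega)]
        exact hleg r hrb
      · have hrb' : r = b := by omega
        rw [hrb', e_leg b (le_refl b), ev_move]
        have e : (a+2) - 1 = a+1 := by omega
        rw [e] at hstrict
        exact hstrict
    · rw [ev_move]
      have e1 : (a+1) - 1 = a := by omega
      rw [e1, e_arm a (le_refl a)]
      exact harm a (by omega)
  · rintro ⟨⟨harm', hleg'⟩, hwrap'⟩
    refine ⟨⟨?_, ?_⟩, ?_⟩
    · intro c hc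
      by_cases hca : c + 2 ≤ a + 1
      · have := harm' c hca
        rwa [e_arm c (by omega), e_arm (c+1) (by omega)] at this
      · have hce : c = a := by omega
        rw [hce]
        have := hwrap'
        have e1 : (a+1) - 1 = a := by omega
        rw [e1, e_arm a (le_refl a), ev_move] at this
        -- this : T (0, a) ≤ T (0, a+1)
        exact this
    · intro r hr
      have := hleg' r (by omega)
      rwa [e_leg r (by omega), e_leg (r+1) (by omega)] at this
    · have := hleg' b (by omega)
      rw [e_leg b (le_refl b), ev_move] at this
      have e : (a+2) - 1 = a+1 := by omega
      rw [e]
      exact this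

lemma hook_base (b : ℕ) (hb : 1 ≤ b) :
    tabSeries (Sh 1 b) (hookOkF 1 b) = tabSeries (Sh 1 b) (RowColOk (Sh 1 b)) := by
  apply tabSeries_congr
  intro T _
  constructor
  · rintro ⟨h, _⟩; exact h
  · intro h
    refine ⟨h, ?_⟩
    obtain ⟨-, hleg⟩ := (rcOk_hook 1 b (by omega) T).mp h
    have chain : ∀ r : ℕ, r ≤ b → T (0, 0) ≤ T (r, 0) := by
      intro r
      induction r with
      | zero => intro _; exact le_refl _
      | succ s ih =>
        intro hs
        exact le_trans (ih (by omega)) (le_of_lt (hleg s (by omega)))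
    show T (0, 1-1) ≤ T (b, 0)
    exact chain b (le_refl b)

lemma hook_sum : ∀ (a b : ℕ), 1 ≤ b →
    tabSeries (Sh (a+1) b) (hookOkF (a+1) b) =
      ∑ j ∈ Finset.range (a+1), ((-1:ℚ)^j) • schur (hookFun (a+1-j) (b+j)) := by
  intro a
  induction a with
  | zero =>
    intro b hb
    rw [hook_base b hb, Finset.sum_range_one]
    simp only [pow_zero, one_smul, Nat.sub_zero, Nat.add_zero]
    exact (schur_hook_tab 1 b).symm
  | succ a ih =>
    intro b hb
    show tabSeries (Sh (a+2) b) (hookOkF (a+2) b) =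
      ∑ j ∈ Finset.range (a+2), ((-1:ℚ)^j) • schur (hookFun (a+2-j) (b+j))
    have hsplit := hook_split (a+2) b
    have hmove := hook_move a b
    have hih := ih (b+1) (by omega)
    have key : tabSeries (Sh (a+2) b) (hookOkF (a+2) b)
        = schur (hookFun (a+2) b) - tabSeries (Sh (a+1) (b+1)) (hookOkF (a+1) (b+1)) := by
      rw [schur_hook_tab, hsplit, hmove]
      ring
    rw [key, hih]
    conv_rhs => rw [Finset.sum_range_succ']
    have eterm : ∀ j ∈ Finset.range (a+1),
        ((-1:ℚ))^(j+1) • schur (hookFun (a+2-(j+1)) (b+(j+1)))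
          = -(((-1:ℚ))^j • schur (hookFun (a+1-j) (b+1+j))) := by
      intro j hj
      have e1 : a+2-(j+1) = a+1-j := by omega
      have e2 : b+(j+1) = b+1+j := by omega
      rw [e1, e2, pow_succ, mul_comm, mul_smul, neg_one_smul]
    rw [Finset.sum_congr rfl eterm]
    simp only [pow_zero, one_smul, Nat.sub_zero, Nat.add_zero]
    rw [Finset.sum_neg_distrib]
    ring


lemma finset_exists_min {α : Type} (r : α → α → Prop) (hrefl : ∀ a, r a a)
    (htrans : ∀ {a b c}, r a b → r b c → r a c)
    (hanti : ∀ {a b}, r a b → r b a → a = b) :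
    ∀ (s : Finset α), ∀ x ∈ s, ∃ y ∈ s, r y x ∧ ∀ z ∈ s, r z y → z = y := by
  intro s
  induction s using Finset.strongInduction with
  | _ s ih =>
    intro x hx
    by_cases hmin : ∀ z ∈ s, r z x → z = x
    · exact ⟨x, hx, hrefl x, hmin⟩
    · push_neg at hmin
      obtain ⟨z, hz, hzx, hzne⟩ := hmin
      have hss : s.erase x ⊂ s := Finset.erase_ssubset hx
      obtain ⟨y, hy, hyz, hymin⟩ := ih (s.erase x) hss z (Finset.mem_erase.mpr ⟨hzne, hz⟩)
      have hyx : r y x := htrans hyz hzx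
      refine ⟨y, (Finset.mem_erase.mp hy).2, hyx, ?_⟩
      intro w hw hwy
      by_cases hwx : w = x
      · exfalso
        subst hwx
        have : w = y := hanti hwy hyx
        exact (Finset.mem_erase.mp hy).1 this.symm
      · exact hymin w (Finset.mem_erase.mpr ⟨hwx, hw⟩) hwy

lemma rowAdj_translate (u v : ℕ) (c : Cyl u v) {x y : Cyl u v} (h : rowAdj u v x y) :
    rowAdj u v (x + c) (y + c) := by
  obtain ⟨a, rfl, rfl⟩ := h
  obtain ⟨w0, rfl⟩ := cmk_surj u v c
  refine ⟨a + w0, rfl, ?_⟩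
  have e : ((a.1 + 1, a.2) : ℤ × ℤ) + w0 = (((a + w0).1 + 1, (a + w0).2) : ℤ × ℤ) := by
    rw [Prod.ext_iff]
    constructor
    · show a.1 + 1 + w0.1 = (a + w0).1 + 1
      rw [Prod.fst_add]; ring
    · show a.2 + w0.2 = (a + w0).2
      rw [Prod.snd_add]
  show cmk u v (a.1 + 1, a.2) + cmk u v w0 = _
  rw [← cmk_add, e]

lemma colAdj_translate (u v : ℕ) (c : Cyl u v) {x y : Cyl u v} (h : colAdj u v x y) :
    colAdj u v (x + c) (y + c) := by
  obtain ⟨a, rfl, rfl⟩ := h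
  obtain ⟨w0, rfl⟩ := cmk_surj u v c
  refine ⟨a + w0, rfl, ?_⟩
  have e : ((a.1, a.2 + 1) : ℤ × ℤ) + w0 = (((a + w0).1, (a + w0).2 + 1) : ℤ × ℤ) := by
    rw [Prod.ext_iff]
    constructor
    · show a.1 + w0.1 = (a + w0).1
      rw [Prod.fst_add]
    · show a.2 + 1 + w0.2 = (a + w0).2 + 1
      rw [Prod.snd_add]; ring
  show cmk u v (a.1, a.2 + 1) + cmk u v w0 = _
  rw [← cmk_add, e]

lemma cle_translate (u v : ℕ) (c : Cyl u v) {x y : Cyl u v} (h : cle u v x y) :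
    cle u v (x + c) (y + c) := by
  obtain ⟨a, b, rfl, rfl, h1, h2⟩ := h
  obtain ⟨w0, rfl⟩ := cmk_surj u v c
  refine ⟨a + w0, b + w0, rfl, rfl, ?_, ?_⟩
  · rw [Prod.fst_add, Prod.fst_add]; linarith
  · rw [Prod.snd_add, Prod.snd_add]; linarith

lemma adjZ_shift (d : ℤ × ℤ) {a b : ℤ × ℤ} (h : adjZ a b) : adjZ (a + d) (b + d) := by
  unfold adjZ at h ⊢
  simp only [Prod.ext_iff, Prod.fst_add, Prod.snd_add] at h ⊢
  omega

/-- the translate of `C` by `-m`, as a set -/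
def trC (u v : ℕ) (C : Set (Cyl u v)) (m : Cyl u v) : Set (Cyl u v) := {x | x + m ∈ C}

lemma trC_mem (u v : ℕ) (C : Set (Cyl u v)) (m x : Cyl u v) :
    x ∈ trC u v C m ↔ x + m ∈ C := Iff.rfl

lemma trC_preimg (u v : ℕ) (C : Set (Cyl u v)) (m : Cyl u v) (w : ℤ × ℤ) (hw : m = cmk u v w)
    (a : ℤ × ℤ) : a ∈ preimg u v (trC u v C m) ↔ a + w ∈ preimg u v C := by
  rw [preimg_mem, preimg_mem, trC_mem, hw, ← cmk_add]

lemma trC_ribbon (u v : ℕ) (C : Set (Cyl u v)) (hC : IsCylRibbon u v C)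
    (m : Cyl u v) (w : ℤ × ℤ) (hw : m = cmk u v w) :
    IsCylRibbon u v (trC u v C m) := by
  obtain ⟨⟨hfin, hconv⟩, hne, hconn, h2x2⟩ := hC
  refine ⟨⟨?_, ?_⟩, ?_, ?_, ?_⟩
  · have : trC u v C m = (fun x => x + m) ⁻¹' C := rfl
    rw [this]
    exact Set.Finite.preimage ((add_left_injective m).injOn) hfin
  · intro x y z h1 h2 hx hz
    exact hconv (x + m) (y + m) (z + m) (cle_translate u v m h1) (cle_translate u v m h2) hx hz
  · obtain ⟨x0, hx0⟩ := hne
    exact ⟨x0 - m, by rw [trC_mem, sub_add_cancel]; exact hx0⟩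
  · intro a b ha hb
    rw [trC_preimg u v C m w hw] at ha hb
    have key : ∀ p q, Relation.ReflTransGen (fun p q => q ∈ preimg u v C ∧ adjZ p q) p q →
        Relation.ReflTransGen (fun p q => q ∈ preimg u v (trC u v C m) ∧ adjZ p q)
          (p - w) (q - w) := by
      intro p q hpq
      induction hpq with
      | refl => exact Relation.ReflTransGen.refl
      | tail hpq hstep ih =>
        refine Relation.ReflTransGen.tail ih ⟨?_, ?_⟩
        · rw [trC_preimg u v C m w hw, sub_add_cancel]
          exact hstep.1
        · have := adjZ_shift (-w) hstep.2
          rwa [← sub_eq_add_neg, ← sub_eq_add_neg] at this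
    have := key (a + w) (b + w) (hconn _ _ ha hb)
    rwa [add_sub_cancel_right, add_sub_cancel_right] at this
  · rintro ⟨a, h1, h2, h3, h4⟩
    apply h2x2
    refine ⟨a + w, ?_, ?_, ?_, ?_⟩
    · rw [← trC_preimg u v C m w hw]; exact h1
    · have e : (((a + w).1 + 1, (a + w).2) : ℤ × ℤ) = ((a.1 + 1, a.2) : ℤ × ℤ) + w := by
        rw [Prod.ext_iff]
        refine ⟨?_, ?_⟩
        · show (a + w).1 + 1 = a.1 + 1 + w.1
          rw [Prod.fst_add]; ring
        · show (a + w).2 = a.2 + w.2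
          rw [Prod.snd_add]
      rw [e, ← trC_preimg u v C m w hw]
      exact h2
    · have e : (((a + w).1, (a + w).2 + 1) : ℤ × ℤ) = ((a.1, a.2 + 1) : ℤ × ℤ) + w := by
        rw [Prod.ext_iff]
        refine ⟨?_, ?_⟩
        · show (a + w).1 = a.1 + w.1
          rw [Prod.fst_add]
        · show (a + w).2 + 1 = a.2 + 1 + w.2
          rw [Prod.snd_add]; ring
      rw [e, ← trC_preimg u v C m w hw]
      exact h3
    · have e : (((a + w).1 + 1, (a + w).2 + 1) : ℤ × ℤ) = ((a.1 + 1, a.2 + 1) : ℤ × ℤ) + w := by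
        rw [Prod.ext_iff]
        refine ⟨?_, ?_⟩
        · show (a + w).1 + 1 = a.1 + 1 + w.1
          rw [Prod.fst_add]; ring
        · show (a + w).2 + 1 = a.2 + 1 + w.2
          rw [Prod.snd_add]; ring
      rw [e, ← trC_preimg u v C m w hw]
      exact h4

lemma trC_cylSchur (u v : ℕ) (C : Set (Cyl u v)) (m : Cyl u v) :
    cylSchur u v C = cylSchur u v (trC u v C m) := by
  set C' := trC u v C m with hC'
  let σ' : ↥C' ≃ ↥C := {
    toFun := fun x => ⟨x.1 + m, x.2⟩
    invFun := fun y => ⟨y.1 - m, by rw [hC', trC_mem, sub_add_cancel]; exact y.2⟩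
    left_inv := fun x => by
      apply Subtype.ext
      show x.1 + m - m = x.1
      rw [add_sub_cancel_right]
    right_inv := fun y => by
      apply Subtype.ext
      show y.1 - m + m = y.1
      rw [sub_add_cancel] }
  show tabSeries C (CylOk u v C) = tabSeries C' (CylOk u v C')
  refine (tabSeries_transport C' C (CylOk u v C') (CylOk u v C) σ' ?_).symm
  intro T hsupp
  set T' := pushT C' C σ' T with hT'
  have ev : ∀ y : Cyl u v, y ∈ C → T' y = T (y - m) := by
    intro y hy
    rw [hT']
    show (if h : y ∈ C then T (σ'.symm ⟨y, h⟩) else 0) = _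
    rw [dif_pos hy]
    rfl
  constructor
  · rintro ⟨hr, hc⟩
    constructor
    · intro x y hx hy hadj
      rw [ev x hx, ev y hy]
      apply hr
      · rw [hC', trC_mem, sub_add_cancel]; exact hx
      · rw [hC', trC_mem, sub_add_cancel]; exact hy
      · have := rowAdj_translate u v (-m) hadj
        rwa [← sub_eq_add_neg, ← sub_eq_add_neg] at this
    · intro x y hx hy hadj
      rw [ev x hx, ev y hy]
      apply hc
      · rw [hC', trC_mem, sub_add_cancel]; exact hx
      · rw [hC', trC_mem, sub_add_cancel]; exact hy
      · have := colAdj_translate u v (-m) hadj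
        rwa [← sub_eq_add_neg, ← sub_eq_add_neg] at this
  · rintro ⟨hr, hc⟩
    constructor
    · intro x y hx hy hadj
      have hxm : x + m ∈ C := hx
      have hym : y + m ∈ C := hy
      have := hr (x + m) (y + m) hxm hym (rowAdj_translate u v m hadj)
      rwa [ev _ hxm, ev _ hym, add_sub_cancel_right, add_sub_cancel_right] at this
    · intro x y hx hy hadj
      have hxm : x + m ∈ C := hx
      have hym : y + m ∈ C := hy
      have := hc (x + m) (y + m) hxm hym (colAdj_translate u v m hadj)
      rwa [ev _ hxm, ev _ hym, add_sub_cancel_right, add_sub_cancel_right] at this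


end Aux

/-- The cylindric skew Schur function of the cylindric hook `H^{n-k}_k` (the cylindric ribbon
in `C_{k,n-k}` with a unique minimal element) equals the alternating sum
`∑_{j=0}^{n-k-1} (-1)^j s_{(n-k-j, 1^{k+j})}` of hook Schur functions. -/
theorem stmt5 (n k : ℕ) (hk : 0 < k) (hkn : k < n) (C : Set (Cyl (n - k) k))
    (hC : IsCylRibbon (n - k) k C)
    (hmin : ∃! m, m ∈ C ∧ ∀ x ∈ C, cle (n - k) k x m → x = m) :
    cylSchur (n - k) k C =
      ∑ j ∈ Finset.range (n - k), ((-1 : ℚ) ^ j) • schur (hookFun (n - k - j) (k + j)) := by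
  have hu : 0 < n - k := by omega
  have hv : 0 < k := hk
  obtain ⟨m, ⟨hmC, hmmin⟩, huniq⟩ := hmin
  have hcle_m : ∀ x ∈ C, cle (n-k) k m x := by
    intro x hx
    obtain ⟨y, hy, hyx, hymin⟩ := Aux.finset_exists_min (cle (n-k) k) (Aux.cle_refl (n-k) k)
      (fun h1 h2 => Aux.cle_trans (n-k) k h1 h2) (fun h1 h2 => Aux.cle_antisymm (n-k) k hu hv h1 h2)
      hC.1.1.toFinset x (hC.1.1.mem_toFinset.mpr hx)
    have hyC : y ∈ C := hC.1.1.mem_toFinset.mp hy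
    have hym : y = m := huniq y ⟨hyC, fun z hz hzy => hymin z (hC.1.1.mem_toFinset.mpr hz) hzy⟩
    rw [← hym]
    exact hyx
  obtain ⟨w, hw⟩ := Aux.cmk_surj (n-k) k m
  set C' := Aux.trC (n-k) k C m with hC'
  have hrib' := Aux.trC_ribbon (n-k) k C hC m w hw
  have h0' : (((0:ℤ), (0:ℤ)) : ℤ × ℤ) ∈ preimg (n-k) k C' := by
    rw [hC', Aux.trC_preimg (n-k) k C m w hw]
    have e : (((0:ℤ), (0:ℤ)) : ℤ × ℤ) + w = w := by
      rw [Prod.ext_iff]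
      constructor
      · show (0:ℤ) + w.1 = w.1
        rw [zero_add]
      · show (0:ℤ) + w.2 = w.2
        rw [zero_add]
    rw [e, Aux.preimg_mem, ← hw]
    exact hmC
  have H2' : ∀ a ∈ preimg (n-k) k C', ∃ t : ℤ, -(t*((n-k:ℕ):ℤ)) ≤ a.1 ∧ t*(k:ℤ) ≤ a.2 := by
    intro a ha
    rw [hC', Aux.trC_preimg (n-k) k C m w hw] at ha
    have hcle := hcle_m (cmk (n-k) k (a + w)) ha
    rw [hw] at hcle
    obtain ⟨t, h1, h2⟩ := (Aux.cle_iff (n-k) k w (a + w)).mp hcle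
    rw [Prod.fst_add] at h1
    rw [Prod.snd_add] at h2
    refine ⟨-t, ?_, ?_⟩
    · have e : -(-t*((n-k:ℕ):ℤ)) = t*((n-k:ℕ):ℤ) := by ring
      rw [e]; linarith
    · have e : (-t)*(k:ℤ) = -(t*k) := by ring
      rw [e]; linarith
  have hpre : preimg (n-k) k C' = Aux.P0 (n-k) k := Aux.classification (n-k) k hu hv C' hrib' h0' H2'
  have step1 : cylSchur (n-k) k C = cylSchur (n-k) k C' := Aux.trC_cylSchur (n-k) k C m
  have step2 : cylSchur (n-k) k C' = tabSeries (Aux.Sh (n-k) k) (Aux.hookOkF (n-k) k) :=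
    Aux.cylSchur_eq_hook (n-k) k hu hv C' hpre
  have step3 := Aux.hook_sum (n - k - 1) k hv
  rw [show n - k - 1 + 1 = n - k from by omega] at step3
  rw [step1, step2, step3]
end
end
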